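/- arXiv:0711.0350 — 4 statements merged into one kernel-verified Lean document; each statement's English description precedes it below -/
import Mathlib

section
/- Let {X_n} be a stationary real-valued process indexed by the integers, and let {P_k} be a nested sequence of countable partitions of the real line into intervals such that for every real x the diameter of the cell of P_k containing x tends to 0 as k → ∞. Let l_k be a nondecreasing sequence of positive integers with l_k ≤ k and l_k → ∞, and define stopping times ζ_0 = 0 and ζ_k = ζ_{k-1} + η_k, where η_k is the least t > 0 such that the P_k-quantized block of length l_k ending at position ζ_{k-1} + t equals the P_k-quantized block of length l_k ending at position ζ_{k-1}. Define the process X̂^{(k)}_n = X_{ζ_k + n} for n ∈ Z. Then for every k ≥ 0, n ≥ 0, m ∈ Z, and Borel set F ⊆ R^{n+1}, one has P((X̂^{(k)}_{m-n},…,X̂^{(k)}_m) ∈ F) = P((X_{m-n},…,X_m) ∈ F); in particular each process {X̂^{(k)}_n} is stationary with the same distribution as {X_n}. -/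
open MeasureTheory Filter Set

noncomputable section

/-- `Q k x` is the cell of the `k`-th partition containing `x`: a nested sequence of
countable partitions of `ℝ` into intervals whose cells shrink to points. -/
def IsNestedIntervalQuantizer (Q : ℕ → ℝ → Set ℝ) : Prop :=
  (∀ k x, x ∈ Q k x) ∧
  (∀ k x, (Q k x).OrdConnected) ∧
  (∀ k x y, Q k x = Q k y ∨ Disjoint (Q k x) (Q k y)) ∧
  (∀ k, (Set.range (Q k)).Countable) ∧
  (∀ k x, Q (k + 1) x ⊆ Q k x) ∧
  (∀ x, Filter.Tendsto (fun k => EMetric.diam (Q k x)) Filter.atTop (nhds 0))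

/-- Block lengths `l k`: nondecreasing, `1 ≤ l k ≤ k`, tending to infinity. -/
def GoodLengths (l : ℕ → ℕ) : Prop :=
  Monotone l ∧ (∀ k, 1 ≤ l k) ∧ (∀ k, 1 ≤ k → l k ≤ k) ∧
    Filter.Tendsto l Filter.atTop Filter.atTop

/-- Two-sided stationarity of a real valued process. -/
def IsTwoSidedStationary {Ω : Type*} [MeasurableSpace Ω] (μ : Measure Ω) (X : ℤ → Ω → ℝ) : Prop :=
  Measure.map (fun ω (n : ℤ) => X (n + 1) ω) μ = Measure.map (fun ω (n : ℤ) => X n ω) μ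

variable {Ω : Type*}

/-- `recEta Q l X k b ω` is the waiting time for the next recurrence of the `P_k`-quantized
block of length `l k` ending at position `b`. -/
def recEta (Q : ℕ → ℝ → Set ℝ) (l : ℕ → ℕ) (X : ℤ → Ω → ℝ) (k : ℕ) (b : ℤ) (ω : Ω) : ℕ :=
  sInf {t : ℕ | 0 < t ∧ ∀ i < l k, Q k (X (b + t - i) ω) = Q k (X (b - i) ω)}

/-- The stopping times `ζ_k` defined by quantized block recurrence. -/
def recZeta (Q : ℕ → ℝ → Set ℝ) (l : ℕ → ℕ) (X : ℤ → Ω → ℝ) : ℕ → Ω → ℤ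
  | 0, _ => 0
  | k + 1, ω => recZeta Q l X k ω + recEta Q l X (k + 1) (recZeta Q l X k ω) ω

/-- The σ-field `σ(X_0^{ζ})` generated by the data segment `X_0, …, X_ζ`. -/
def sigmaSeg [MeasurableSpace Ω] (X : ℤ → Ω → ℝ) (ζ : Ω → ℤ) : MeasurableSpace Ω :=
  MeasurableSpace.comap
    (fun ω => (ζ ω, fun n : ℕ => if (n : ℤ) ≤ ζ ω then X n ω else 0)) inferInstance

/-- The σ-field `σ(X_{-∞}^{ζ})` generated by the whole past up to time `ζ`. -/
def sigmaPastAt [MeasurableSpace Ω] (X : ℤ → Ω → ℝ) (ζ : Ω → ℤ) : MeasurableSpace Ω :=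
  MeasurableSpace.comap (fun ω => (ζ ω, fun n : ℕ => X (ζ ω - n) ω)) inferInstance

/-- The σ-field `σ(X_{-∞}^{0})` of the infinite past. -/
def sigmaPast [MeasurableSpace Ω] (X : ℤ → Ω → ℝ) : MeasurableSpace Ω :=
  MeasurableSpace.comap (fun ω => fun n : ℕ => X (-(n : ℤ)) ω) inferInstance

/-- The metric `d*` on one-sided sequences `(…, x_{-1}, x_0)`, with `x i` standing
for the coordinate `x_{-i}`. -/
def dstar (x y : ℕ → ℝ) : ℝ :=
  ∑' i : ℕ, (1 / 2 ^ (i + 1)) * (|x i - y i| / (1 + |x i - y i|))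

/-- Continuity of `e` on the set `C` with respect to the metric `d*`. -/
def DStarContinuousOn (e : (ℕ → ℝ) → ℝ) (C : Set (ℕ → ℝ)) : Prop :=
  ∀ x ∈ C, ∀ ε > 0, ∃ δ > 0, ∀ y ∈ C, dstar x y < δ → |e y - e x| < ε

end

noncomputable section RecAuxSec
namespace RecAux

variable (Q : ℕ → ℝ → Set ℝ) (l : ℕ → ℕ)

/-- Shift of a two-sided sequence. -/
def shift (c : ℤ) (x : ℤ → ℝ) : ℤ → ℝ := fun n => x (n + c)

lemma measurable_shift (c : ℤ) : Measurable (shift c) :=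
  measurable_pi_lambda _ fun n => measurable_pi_apply _

lemma shift_shift (c d : ℤ) (x : ℤ → ℝ) : shift c (shift d x) = shift (c + d) x := by
  funext n; simp [shift, add_assoc]

lemma shift_zero (x : ℤ → ℝ) : shift 0 x = x := by funext n; simp [shift]

/-- Equality of quantized blocks of length `l k` ending at `a` resp. `b`. -/
def pmatch (k : ℕ) (x : ℤ → ℝ) (a b : ℤ) : Prop :=
  ∀ i < l k, Q k (x (a - i)) = Q k (x (b - i))

/-- Path-space version of `recEta`. -/
def pEta (k : ℕ) (b : ℤ) (x : ℤ → ℝ) : ℕ :=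
  sInf {t : ℕ | 0 < t ∧ pmatch Q l k x (b + t) b}

/-- Path-space version of `recZeta`. -/
def pZeta : ℕ → (ℤ → ℝ) → ℤ
  | 0, _ => 0
  | k + 1, x => pZeta k x + pEta Q l (k + 1) (pZeta k x) x

lemma pmatch_shift (k : ℕ) (c a b : ℤ) (x : ℤ → ℝ) :
    pmatch Q l k (shift c x) a b ↔ pmatch Q l k x (a + c) (b + c) := by
  unfold pmatch shift
  constructor <;> intro h i hi <;>
    · have := h i hi
      convert this using 3 <;> ring

lemma pEta_shift (k : ℕ) (c b : ℤ) (x : ℤ → ℝ) :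
    pEta Q l k b (shift c x) = pEta Q l k (b + c) x := by
  unfold pEta
  congr 1
  ext t
  simp only [Set.mem_setOf_eq, pmatch_shift]
  rw [show b + c + (t : ℤ) = b + (t : ℤ) + c from by ring]


/-- The chain of stopping positions started at `c`. -/
def zetaFrom (x : ℤ → ℝ) (c : ℤ) : ℕ → ℤ
  | 0 => c
  | k + 1 => zetaFrom x c k + pEta Q l (k + 1) (zetaFrom x c k) x

lemma pZeta_shift (k : ℕ) (c : ℤ) (x : ℤ → ℝ) :
    pZeta Q l k (shift c x) + c = zetaFrom Q l x c k := by
  induction k with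
  | zero => simp [pZeta, zetaFrom]
  | succ k ih =>
      show pZeta Q l k (shift c x) + pEta Q l (k + 1) (pZeta Q l k (shift c x)) (shift c x) + c
        = zetaFrom Q l x c k + pEta Q l (k + 1) (zetaFrom Q l x c k) x
      rw [pEta_shift, ← ih]
      ring

/-- Recurrence of every block at every position. -/
def Rec (x : ℤ → ℝ) : Prop :=
  ∀ (k : ℕ) (b : ℤ), ∃ t : ℕ, 0 < t ∧ pmatch Q l k x (b + t) b

lemma pEta_spec {x : ℤ → ℝ} (hx : Rec Q l x) (k : ℕ) (b : ℤ) :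
    0 < pEta Q l k b x ∧ pmatch Q l k x (b + pEta Q l k b x) b ∧
      ∀ s : ℕ, 0 < s → pmatch Q l k x (b + s) b → pEta Q l k b x ≤ s := by
  have hne : {t : ℕ | 0 < t ∧ pmatch Q l k x (b + t) b}.Nonempty := hx k b
  have hmem := Nat.sInf_mem hne
  exact ⟨hmem.1, hmem.2, fun s hs hm => Nat.sInf_le ⟨hs, hm⟩⟩

lemma eta_chain_unique {x : ℤ → ℝ} (hx : Rec Q l x) (k : ℕ) :
    ∀ u v : ℤ, u + (pEta Q l k u x : ℤ) = v + (pEta Q l k v x : ℤ) → u = v := by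
  have key : ∀ u v : ℤ, u < v →
      u + (pEta Q l k u x : ℤ) = v + (pEta Q l k v x : ℤ) → False := by
    intro u v hlt hw
    obtain ⟨he1, he2, he3⟩ := pEta_spec Q l hx k u
    obtain ⟨hf1, hf2, hf3⟩ := pEta_spec Q l hx k v
    set e := pEta Q l k u x with hee
    set f := pEta Q l k v x with hff
    -- the block ending at v equals the block ending at u
    have hm : pmatch Q l k x v u := by
      intro i hi
      have h1 := he2 i hi
      have h2 := hf2 i hi
      rw [hw] at h1
      exact h2.symm.trans h1
    -- minimality of e at u forces u + e ≤ v, contradiction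
    set s : ℕ := (v - u).toNat with hs
    have hsz : (s : ℤ) = v - u := Int.toNat_of_nonneg (by omega)
    have hspos : 0 < s := by omega
    have hm' : pmatch Q l k x (u + s) u := by
      rw [show u + (s : ℤ) = v by omega]
      exact hm
    have hle : e ≤ s := he3 s hspos hm'
    have : u + (e : ℤ) ≤ v := by omega
    omega
  intro u v hw
  rcases lt_trichotomy u v with hlt | heq | hgt
  · exact absurd hw (by intro h; exact key u v hlt h)
  · exact heq
  · exact absurd hw.symm (by intro h; exact key v u hgt h)

lemma zetaFrom_inj {x : ℤ → ℝ} (hx : Rec Q l x) :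
    ∀ (k : ℕ) (c c' : ℤ), zetaFrom Q l x c k = zetaFrom Q l x c' k → c = c' := by
  intro k
  induction k with
  | zero => intro c c' h; exact h
  | succ k ih =>
      intro c c' h
      have huv : zetaFrom Q l x c k = zetaFrom Q l x c' k :=
        eta_chain_unique Q l hx (k + 1) _ _ h
      exact ih c c' huv

lemma pEta_eq_zero_iff (k : ℕ) (b : ℤ) (x : ℤ → ℝ) :
    pEta Q l k b x = 0 ↔ ∀ s : ℕ, ¬(0 < s ∧ pmatch Q l k x (b + s) b) := by
  unfold pEta
  rw [Nat.sInf_eq_zero]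
  constructor
  · rintro (h | h)
    · exact absurd h.1 (lt_irrefl 0)
    · intro s hs; rw [Set.eq_empty_iff_forall_notMem] at h; exact h s hs
  · intro h
    right
    exact Set.eq_empty_iff_forall_notMem.2 h

lemma pEta_eq_pos_iff (k : ℕ) (b : ℤ) (x : ℤ → ℝ) (t : ℕ) (ht : 0 < t) :
    pEta Q l k b x = t ↔
      pmatch Q l k x (b + t) b ∧ ∀ s < t, ¬(0 < s ∧ pmatch Q l k x (b + s) b) := by
  constructor
  · intro h
    have hne : {s : ℕ | 0 < s ∧ pmatch Q l k x (b + s) b}.Nonempty := by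
      by_contra hc
      rw [Set.not_nonempty_iff_eq_empty] at hc
      rw [pEta, hc, Nat.sInf_empty] at h
      omega
    have hpe : pEta Q l k b x = sInf {s : ℕ | 0 < s ∧ pmatch Q l k x (b + s) b} := rfl
    have hst : sInf {s : ℕ | 0 < s ∧ pmatch Q l k x (b + s) b} = t := hpe ▸ h
    have hmem := Nat.sInf_mem hne
    rw [hst] at hmem
    refine ⟨hmem.2, fun s hs => ?_⟩
    exact Nat.notMem_of_lt_sInf (hst ▸ hs)
  · rintro ⟨hm, hmin⟩
    have hmem : t ∈ {s : ℕ | 0 < s ∧ pmatch Q l k x (b + s) b} := ⟨ht, hm⟩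
    refine le_antisymm (Nat.sInf_le hmem) ?_
    by_contra hc
    push_neg at hc
    exact hmin _ hc (Nat.sInf_mem ⟨t, hmem⟩)


section Meas
variable (hQ : IsNestedIntervalQuantizer Q)
include hQ

lemma cell_fiber {k : ℕ} {p : Set ℝ} (hp : p ∈ Set.range (Q k)) :
    {y : ℝ | Q k y = p} = p := by
  obtain ⟨z, rfl⟩ := hp
  ext y
  simp only [Set.mem_setOf_eq]
  constructor
  · intro h; rw [← h]; exact hQ.1 k y
  · intro h
    rcases hQ.2.2.1 k y z with heq | hdisj
    · exact heq
    · exact absurd rfl (hdisj.ne_of_mem (hQ.1 k y) h)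

lemma measurable_cell_fiber {k : ℕ} {p : Set ℝ} (hp : p ∈ Set.range (Q k)) :
    MeasurableSet {y : ℝ | Q k y = p} := by
  rw [cell_fiber Q hQ hp]
  obtain ⟨z, rfl⟩ := hp
  exact (hQ.2.1 k z).measurableSet

lemma cellEq_iff (k : ℕ) (u v : ℝ) :
    Q k u = Q k v ↔ ∃ p ∈ Set.range (Q k), u ∈ p ∧ v ∈ p := by
  constructor
  · intro h
    exact ⟨Q k u, ⟨u, rfl⟩, hQ.1 k u, h ▸ hQ.1 k v⟩
  · rintro ⟨p, ⟨z, rfl⟩, hu, hv⟩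
    have h1 : Q k u = Q k z := by
      rcases hQ.2.2.1 k u z with heq | hdisj
      · exact heq
      · exact absurd rfl (hdisj.ne_of_mem (hQ.1 k u) hu)
    have h2 : Q k v = Q k z := by
      rcases hQ.2.2.1 k v z with heq | hdisj
      · exact heq
      · exact absurd rfl (hdisj.ne_of_mem (hQ.1 k v) hv)
    rw [h1, h2]

lemma measurable_cellEq (k : ℕ) (a b : ℤ) :
    MeasurableSet {x : ℤ → ℝ | Q k (x a) = Q k (x b)} := by
  have : {x : ℤ → ℝ | Q k (x a) = Q k (x b)} =
      ⋃ p ∈ Set.range (Q k), ((fun x : ℤ → ℝ => x a) ⁻¹' p ∩ (fun x : ℤ → ℝ => x b) ⁻¹' p) := by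
    ext x
    constructor
    · intro h
      obtain ⟨p, hp, h1, h2⟩ := (cellEq_iff Q hQ k (x a) (x b)).1 h
      exact Set.mem_biUnion hp ⟨h1, h2⟩
    · intro h
      obtain ⟨p, hp, hx⟩ := Set.mem_iUnion₂.1 h
      exact (cellEq_iff Q hQ k (x a) (x b)).2 ⟨p, hp, hx.1, hx.2⟩
  rw [this]
  refine MeasurableSet.biUnion (hQ.2.2.2.1 k) fun p hp => ?_
  obtain ⟨z, rfl⟩ := hp
  exact ((measurable_pi_apply a) (hQ.2.1 k z).measurableSet).inter
    ((measurable_pi_apply b) (hQ.2.1 k z).measurableSet)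

lemma measurable_pmatchSet (k : ℕ) (a b : ℤ) :
    MeasurableSet {x : ℤ → ℝ | pmatch Q l k x a b} := by
  have : {x : ℤ → ℝ | pmatch Q l k x a b} =
      ⋂ i : ℕ, ⋂ (_ : i < l k), {x : ℤ → ℝ | Q k (x (a - i)) = Q k (x (b - i))} := by
    ext x; simp [pmatch]
  rw [this]
  exact MeasurableSet.iInter fun i => MeasurableSet.iInter fun _ =>
    measurable_cellEq Q hQ k _ _

lemma measurable_condSet (k : ℕ) (b : ℤ) (s : ℕ) :
    MeasurableSet {x : ℤ → ℝ | 0 < s ∧ pmatch Q l k x (b + s) b} := by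
  by_cases h : 0 < s
  · simp only [h, true_and]
    exact measurable_pmatchSet Q l hQ k _ _
  · simp [h]

lemma measurable_pEta (k : ℕ) (b : ℤ) : Measurable (pEta Q l k b) := by
  apply measurable_to_countable'
  intro t
  rcases Nat.eq_zero_or_pos t with rfl | ht
  · have : pEta Q l k b ⁻¹' {0} =
        ⋂ s : ℕ, {x : ℤ → ℝ | 0 < s ∧ pmatch Q l k x (b + s) b}ᶜ := by
      ext x
      simp only [Set.mem_preimage, Set.mem_singleton_iff, Set.mem_iInter, Set.mem_compl_iff,
        Set.mem_setOf_eq]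
      exact pEta_eq_zero_iff Q l k b x
    rw [this]
    exact MeasurableSet.iInter fun s => (measurable_condSet Q l hQ k b s).compl
  · have : pEta Q l k b ⁻¹' {t} =
        {x : ℤ → ℝ | pmatch Q l k x (b + t) b} ∩
          ⋂ s : ℕ, ⋂ (_ : s < t), {x : ℤ → ℝ | 0 < s ∧ pmatch Q l k x (b + s) b}ᶜ := by
      ext x
      simp only [Set.mem_preimage, Set.mem_singleton_iff, Set.mem_inter_iff, Set.mem_iInter,
        Set.mem_compl_iff, Set.mem_setOf_eq]
      rw [pEta_eq_pos_iff Q l k b x t ht]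
    rw [this]
    exact (measurable_pmatchSet Q l hQ k _ _).inter
      (MeasurableSet.iInter fun s => MeasurableSet.iInter fun _ =>
        (measurable_condSet Q l hQ k b s).compl)

lemma measurable_pZeta (k : ℕ) : Measurable (pZeta Q l k) := by
  induction k with
  | zero => exact measurable_const
  | succ k ih =>
      have h2 : Measurable fun x : ℤ → ℝ => pEta Q l (k + 1) (pZeta Q l k x) x := by
        have hf : Measurable fun p : (ℤ → ℝ) × ℤ => pEta Q l (k + 1) p.2 p.1 :=
          measurable_from_prod_countable_left fun c => measurable_pEta Q l hQ (k + 1) c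
        exact hf.comp (measurable_id.prodMk ih)
      exact ih.add (measurable_from_top.comp h2)

omit hQ in
lemma measurable_eval (a : ℤ → ℤ) {g : (ℤ → ℝ) → ℤ} (hg : Measurable g) :
    Measurable fun x : ℤ → ℝ => x (a (g x)) := by
  have hf : Measurable fun p : (ℤ → ℝ) × ℤ => p.1 (a p.2) :=
    measurable_from_prod_countable_left fun j => measurable_pi_apply (a j)
  exact hf.comp (measurable_id.prodMk hg)

end Meas

section MeasureSec
variable (hQ : IsNestedIntervalQuantizer Q)
variable (ν : Measure (ℤ → ℝ)) [IsProbabilityMeasure ν]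

lemma shift_id : shift 0 = id := by funext x; exact shift_zero x

lemma measurePreserving_all (h1 : MeasurePreserving (shift 1) ν ν) :
    ∀ c : ℤ, MeasurePreserving (shift c) ν ν := by
  have hcomp : ∀ c d : ℤ, MeasurePreserving (shift c) ν ν → MeasurePreserving (shift d) ν ν →
      MeasurePreserving (shift (c + d)) ν ν := by
    intro c d hc hd
    have : shift (c + d) = shift c ∘ shift d := by
      funext x; rw [Function.comp_apply, shift_shift]
    rw [this]
    exact hc.comp hd
  have hneg : MeasurePreserving (shift (-1)) ν ν := by
    refine ⟨measurable_shift _, ?_⟩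
    calc Measure.map (shift (-1)) ν = Measure.map (shift (-1)) (Measure.map (shift 1) ν) := by
          rw [h1.map_eq]
      _ = Measure.map (shift (-1) ∘ shift 1) ν := by
          rw [Measure.map_map (measurable_shift _) (measurable_shift _)]
      _ = ν := by
          have : shift (-1) ∘ shift 1 = id := by
            funext x; rw [Function.comp_apply, shift_shift]; norm_num; exact shift_zero x
          rw [this, Measure.map_id]
  intro c
  induction c using Int.induction_on with
  | zero => rw [shift_id]; exact MeasurePreserving.id ν
  | succ i ih => exact hcomp i 1 ih h1
  | pred i ih => exact (by have := hcomp (-i) (-1) ih hneg; rwa [show (-i:ℤ) + -1 = -i - 1 by ring] at this)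

lemma shift_iterate (n : ℕ) (x : ℤ → ℝ) : (shift 1)^[n] x = shift (n : ℤ) x := by
  induction n with
  | zero => simp [shift_zero]
  | succ n ih =>
      rw [Function.iterate_succ_apply', ih, shift_shift]
      norm_num [add_comm]

include hQ in
/-- a.e. every quantized block recurs at every position. -/
lemma ae_Rec (h1 : MeasurePreserving (shift 1) ν ν) :
    ν {x | ¬ Rec Q l x} = 0 := by
  have hall := measurePreserving_all ν h1
  -- base sets
  set R0 : ℕ → Set (ℤ → ℝ) := fun k =>
    {x | ∃ t : ℕ, 0 < t ∧ pmatch Q l k x ((0 : ℤ) + t) 0} with hR0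
  have hR0meas : ∀ k, MeasurableSet (R0 k) := by
    intro k
    have : R0 k = ⋃ t : ℕ, {x : ℤ → ℝ | 0 < t ∧ pmatch Q l k x ((0 : ℤ) + t) 0} := by
      ext x; simp [hR0]
    rw [this]
    exact MeasurableSet.iUnion fun t => measurable_condSet Q l hQ k 0 t
  -- Poincaré recurrence for each pattern
  have hbase : ∀ k, ν (R0 k)ᶜ = 0 := by
    intro k
    have hcount : Countable ↥(Set.range (Q k)) := (hQ.2.2.2.1 k).to_subtype
    set A : (Fin (l k) → ↥(Set.range (Q k))) → Set (ℤ → ℝ) := fun p =>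
      {x | ∀ i : Fin (l k), Q k (x (-((i : ℕ) : ℤ))) = (p i : Set ℝ)} with hA
    have hAmeas : ∀ p, MeasurableSet (A p) := by
      intro p
      have : A p = ⋂ i : Fin (l k),
          (fun x : ℤ → ℝ => x (-((i : ℕ) : ℤ))) ⁻¹' {y : ℝ | Q k y = (p i : Set ℝ)} := by
        ext x; simp [hA]
      rw [this]
      exact MeasurableSet.iInter fun i =>
        (measurable_pi_apply _) (measurable_cell_fiber Q hQ (p i).2)
    have hcons := h1.conservative
    have hae : ∀ᵐ x ∂ν, ∀ p, x ∈ A p → ∃ᶠ n in Filter.atTop, (shift 1)^[n] x ∈ A p := by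
      rw [MeasureTheory.ae_all_iff]
      exact fun p => hcons.ae_mem_imp_frequently_image_mem (hAmeas p).nullMeasurableSet
    have hmem : ∀ᵐ x ∂ν, x ∈ R0 k := by
      filter_upwards [hae] with x hx
      set p : Fin (l k) → ↥(Set.range (Q k)) :=
        fun i => ⟨Q k (x (-((i : ℕ) : ℤ))), Set.mem_range_self _⟩ with hp
      have hxA : x ∈ A p := fun i => rfl
      obtain ⟨n, hn1, hnA⟩ := (Filter.frequently_atTop.1 (hx p hxA)) 1
      rw [shift_iterate] at hnA
      simp only [hR0, Set.mem_setOf_eq]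
      refine ⟨n, by omega, ?_⟩
      intro i hi
      have h1' := hnA ⟨i, hi⟩
      have h2' : Q k (x (-((i : ℕ) : ℤ))) = (p ⟨i, hi⟩ : Set ℝ) := rfl
      have h3' : (shift (n : ℤ) x) (-((i : ℕ) : ℤ)) = x ((0 : ℤ) + n - i) := by
        show x (-((i : ℕ) : ℤ) + n) = x ((0 : ℤ) + n - i)
        congr 1; ring
      rw [h3'] at h1'
      rw [show (0 : ℤ) - (i : ℤ) = -((i : ℕ) : ℤ) by ring]
      exact h1'.trans h2'.symm
    rw [MeasureTheory.ae_iff] at hmem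
    exact hmem
  -- transport to every position and intersect
  have hshift : ∀ (k : ℕ) (b : ℤ),
      {x | ¬ ∃ t : ℕ, 0 < t ∧ pmatch Q l k x (b + t) b} = shift b ⁻¹' (R0 k)ᶜ := by
    intro k b
    ext x
    simp only [Set.mem_setOf_eq, Set.mem_preimage, Set.mem_compl_iff, hR0, Set.mem_setOf_eq]
    constructor
    · intro h hc
      obtain ⟨t, ht, hm⟩ := hc
      rw [pmatch_shift, show (0 : ℤ) + t + b = b + t by ring,
        show (0 : ℤ) + b = b by ring] at hm
      exact h ⟨t, ht, hm⟩
    · intro h hc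
      obtain ⟨t, ht, hm⟩ := hc
      refine h ⟨t, ht, ?_⟩
      rw [pmatch_shift, show (0 : ℤ) + t + b = b + t by ring, show (0 : ℤ) + b = b by ring]
      exact hm
  have hnull : ∀ (k : ℕ) (b : ℤ),
      ν {x | ¬ ∃ t : ℕ, 0 < t ∧ pmatch Q l k x (b + t) b} = 0 := by
    intro k b
    rw [hshift k b, (hall b).measure_preimage (hR0meas k).compl.nullMeasurableSet]
    exact hbase k
  have : {x | ¬ Rec Q l x} =
      ⋃ k : ℕ, ⋃ b : ℤ, {x | ¬ ∃ t : ℕ, 0 < t ∧ pmatch Q l k x (b + t) b} := by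
    ext x
    simp only [Set.mem_setOf_eq, Set.mem_iUnion, Rec, not_forall]
  rw [this]
  exact measure_iUnion_null fun k => measure_iUnion_null fun b => hnull k b

end MeasureSec

lemma recZeta_eq {Ω : Type*} (X : ℤ → Ω → ℝ) (k : ℕ) (ω : Ω) :
    recZeta Q l X k ω = pZeta Q l k (fun j => X j ω) := by
  induction k with
  | zero => rfl
  | succ k ih =>
      show recZeta Q l X k ω + (recEta Q l X (k + 1) (recZeta Q l X k ω) ω : ℤ) = _
      rw [ih]
      rfl


end RecAux
end RecAuxSec

/-- The process viewed from the stopping time `ζ_k`, i.e. `X̂^{(k)}_n = X_{ζ_k+n}`,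
has the same finite dimensional distributions as the original stationary process. -/
theorem intermittent_shifted_process_same_distribution
    {Ω : Type*} [MeasurableSpace Ω] (μ : Measure Ω) [IsProbabilityMeasure μ]
    (X : ℤ → Ω → ℝ) (hXmeas : ∀ n, Measurable (X n)) (hstat : IsTwoSidedStationary μ X)
    (Q : ℕ → ℝ → Set ℝ) (hQ : IsNestedIntervalQuantizer Q)
    (l : ℕ → ℕ) (hl : GoodLengths l) :
    ∀ (k n : ℕ) (m : ℤ) (F : Set (Fin (n + 1) → ℝ)), MeasurableSet F →
      μ {ω | (fun i : Fin (n + 1) =>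
          X (recZeta Q l X k ω + m - n + ((i : ℕ) : ℤ)) ω) ∈ F}
        = μ {ω | (fun i : Fin (n + 1) => X (m - n + ((i : ℕ) : ℤ)) ω) ∈ F} := by
  classical
  intro k n m F hF
  open RecAux in
  -- the path map and the law of the process
  set π : Ω → (ℤ → ℝ) := fun ω (j : ℤ) => X j ω with hπ
  have hπmeas : Measurable π := measurable_pi_lambda _ fun j => hXmeas j
  set ν : Measure (ℤ → ℝ) := μ.map π with hν
  haveI hνprob : IsProbabilityMeasure ν := Measure.isProbabilityMeasure_map hπmeas.aemeasurable
  have h1 : MeasurePreserving (shift 1) ν ν := by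
    refine ⟨measurable_shift 1, ?_⟩
    rw [hν, Measure.map_map (measurable_shift 1) hπmeas]
    have hcompeq : shift 1 ∘ π = fun ω (j : ℤ) => X (j + 1) ω := by
      funext ω j; rfl
    rw [hcompeq]
    exact hstat
  have hall := measurePreserving_all ν h1
  have hRec0 : ν {x | ¬ Rec Q l x} = 0 := ae_Rec Q l hQ ν h1
  -- the relevant sets on path space
  set G : Set (ℤ → ℝ) :=
    (fun (x : ℤ → ℝ) (i : Fin (n + 1)) => x (m - n + ((i : ℕ) : ℤ))) ⁻¹' F with hG
  have hGmeas : MeasurableSet G :=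
    (measurable_pi_lambda _ fun i => measurable_pi_apply _) hF
  set Gs : ℤ → Set (ℤ → ℝ) := fun j =>
    (fun (x : ℤ → ℝ) (i : Fin (n + 1)) => x (j + m - n + ((i : ℕ) : ℤ))) ⁻¹' F with hGs
  have hGsmeas : ∀ j, MeasurableSet (Gs j) := fun j =>
    (measurable_pi_lambda _ fun i => measurable_pi_apply _) hF
  set Z : ℤ → Set (ℤ → ℝ) := fun j => {x | pZeta Q l k x = j} with hZ
  have hZmeas : ∀ j, MeasurableSet (Z j) := fun j =>
    measurable_pZeta Q l hQ k (measurableSet_singleton j)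
  set B : ℤ → Set (ℤ → ℝ) := fun j => {x | pZeta Q l k (shift (-j) x) = j} with hB
  have hBmeas : ∀ j, MeasurableSet (B j) := fun j =>
    ((measurable_pZeta Q l hQ k).comp (measurable_shift (-j))) (measurableSet_singleton j)
  -- left hand side as a path-space event
  set T : Set (ℤ → ℝ) :=
    {x | (fun i : Fin (n + 1) => x (pZeta Q l k x + m - n + ((i : ℕ) : ℤ))) ∈ F} with hT
  have hTmeas : MeasurableSet T := by
    have : Measurable fun (x : ℤ → ℝ) (i : Fin (n + 1)) =>
        x (pZeta Q l k x + m - n + ((i : ℕ) : ℤ)) :=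
      measurable_pi_lambda _ fun i =>
        measurable_eval (fun j : ℤ => j + m - n + ((i : ℕ) : ℤ))
          (measurable_pZeta Q l hQ k)
    exact this hF
  have hLHS : {ω | (fun i : Fin (n + 1) =>
      X (recZeta Q l X k ω + m - n + ((i : ℕ) : ℤ)) ω) ∈ F} = π ⁻¹' T := by
    ext ω
    simp only [Set.mem_setOf_eq, Set.mem_preimage, hT]
    have hfun : (fun i : Fin (n + 1) => X (recZeta Q l X k ω + m - n + ((i : ℕ) : ℤ)) ω)
        = fun i : Fin (n + 1) => π ω (pZeta Q l k (π ω) + m - n + ((i : ℕ) : ℤ)) := by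
      funext i
      rw [recZeta_eq Q l X k ω]
    rw [hfun]
  have hRHS : {ω | (fun i : Fin (n + 1) => X (m - n + ((i : ℕ) : ℤ)) ω) ∈ F}
      = π ⁻¹' G := rfl
  -- decomposition of T according to the value of `pZeta`
  have hTunion : T = ⋃ j : ℤ, (Z j ∩ Gs j) := by
    ext x
    simp only [hT, Set.mem_setOf_eq, Set.mem_iUnion, Set.mem_inter_iff, hZ, hGs,
      Set.mem_preimage]
    constructor
    · intro h
      exact ⟨pZeta Q l k x, rfl, h⟩
    · rintro ⟨j, rfl, hGj⟩
      exact hGj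
  have hZGdisj : Pairwise (Function.onFun Disjoint fun j => Z j ∩ Gs j) := by
    intro j j' hjj'
    refine Set.disjoint_left.2 ?_
    rintro x ⟨hxZ, -⟩ ⟨hxZ', -⟩
    exact hjj' (hxZ.symm.trans hxZ')
  -- the per-value identity via measure preservation
  have hkey : ∀ j : ℤ, ν (Z j ∩ Gs j) = ν (B j ∩ G) := by
    intro j
    have hpre : shift (-j) ⁻¹' (Z j ∩ Gs j) = B j ∩ G := by
      ext x
      simp only [Set.preimage_inter, Set.mem_inter_iff, Set.mem_preimage, hZ, hGs, hB, hG,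
        Set.mem_setOf_eq]
      have harg : (fun i : Fin (n + 1) => shift (-j) x (j + m - n + ((i : ℕ) : ℤ)))
          = fun i : Fin (n + 1) => x (m - n + ((i : ℕ) : ℤ)) := by
        funext i
        show x (j + m - n + ((i : ℕ) : ℤ) + (-j)) = x (m - n + ((i : ℕ) : ℤ))
        congr 1; ring
      rw [harg]
    rw [← hpre]
    exact ((hall (-j)).measure_preimage
      ((hZmeas j).inter (hGsmeas j)).nullMeasurableSet).symm
  -- the sets `B j` are a.e. pairwise disjoint
  have hBae : Pairwise (Function.onFun (MeasureTheory.AEDisjoint ν) B) := by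
    intro j j' hjj'
    refine measure_mono_null ?_ hRec0
    rintro x ⟨hxj, hxj'⟩
    simp only [Set.mem_setOf_eq]
    intro hrec
    have e1 : zetaFrom Q l x (-j) k = 0 := by
      rw [← pZeta_shift, hxj]; ring
    have e2 : zetaFrom Q l x (-j') k = 0 := by
      rw [← pZeta_shift, hxj']; ring
    have := zetaFrom_inj Q l hrec k (-j) (-j') (e1.trans e2.symm)
    exact hjj' (by omega)
  -- the union of the `B j` is conull
  have hBsum : ∀ j, ν (B j) = ν (Z j) := by
    intro j
    have : shift (-j) ⁻¹' (Z j) = B j := rfl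
    rw [← this]
    exact (hall (-j)).measure_preimage (hZmeas j).nullMeasurableSet
  have hZunion : (⋃ j : ℤ, Z j) = Set.univ := by
    ext x
    simp only [Set.mem_iUnion, Set.mem_univ, iff_true, hZ, Set.mem_setOf_eq]
    exact ⟨pZeta Q l k x, rfl⟩
  have hZdisj : Pairwise (Function.onFun Disjoint Z) := by
    intro j j' hjj'
    refine Set.disjoint_left.2 ?_
    intro x hxZ hxZ'
    exact hjj' (hxZ.symm.trans hxZ')
  have hsumZ : ∑' j : ℤ, ν (Z j) = 1 := by
    rw [← measure_iUnion hZdisj hZmeas, hZunion, measure_univ]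
  have hU1 : ν (⋃ j : ℤ, B j) = 1 := by
    rw [measure_iUnion₀ hBae (fun j => (hBmeas j).nullMeasurableSet)]
    rw [tsum_congr hBsum]
    exact hsumZ
  have hUc : ν (⋃ j : ℤ, B j)ᶜ = 0 := by
    have := measure_compl (MeasurableSet.iUnion hBmeas) (measure_ne_top ν _)
    rw [hU1, measure_univ] at this
    simpa using this
  -- conclude
  have hGsplit : ν G = ∑' j : ℤ, ν (B j ∩ G) := by
    have hdiff : ν (G \ ⋃ j : ℤ, B j) = 0 :=
      measure_mono_null (Set.diff_subset_compl _ _) hUc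
    have hinter : ν (G ∩ ⋃ j : ℤ, B j) = ν G := by
      have := measure_inter_add_diff G (MeasurableSet.iUnion hBmeas) (μ := ν)
      rw [hdiff, add_zero] at this
      exact this
    have hGU : G ∩ (⋃ j : ℤ, B j) = ⋃ j : ℤ, (B j ∩ G) := by
      ext x
      simp only [Set.mem_inter_iff, Set.mem_iUnion]
      tauto
    have hae2 : Pairwise (Function.onFun (MeasureTheory.AEDisjoint ν) fun j => B j ∩ G) := by
      intro j j' hjj'
      exact measure_mono_null
        (Set.inter_subset_inter Set.inter_subset_left Set.inter_subset_left) (hBae hjj')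
    rw [← hinter, hGU]
    exact measure_iUnion₀ hae2 fun j => ((hBmeas j).inter hGmeas).nullMeasurableSet
  have hmapT : μ (π ⁻¹' T) = ν T := (Measure.map_apply hπmeas hTmeas).symm
  have hmapG : μ (π ⁻¹' G) = ν G := (Measure.map_apply hπmeas hGmeas).symm
  rw [hLHS, hRHS, hmapT, hmapG, hTunion,
    measure_iUnion hZGdisj (fun j => (hZmeas j).inter (hGsmeas j)),
    tsum_congr hkey, ← hGsplit]
end

section
/- With the stopping times ζ_j as defined via quantized block recurrences, for every fixed n ≥ 0 the partition cells [X_{ζ_j - n}]^j form, for all sufficiently large j, a decreasing sequence of intervals whose diameters tend to 0 almost surely as j → ∞. -/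
open MeasureTheory Filter Set

noncomputable section

/-- Two-sided stationarity of a real valued process. -/
def IsStationaryRealProcess {Ω : Type*} [MeasurableSpace Ω] (μ : Measure Ω) (X : ℤ → Ω → ℝ) : Prop :=
  Measure.map (fun ω (n : ℤ) => X (n + 1) ω) μ = Measure.map (fun ω (n : ℤ) => X n ω) μ

variable {Ω : Type*}

end


/-! ### Auxiliary development -/
open scoped ENNReal
noncomputable section

theorem ICS_cell_eq_of_mem {Q : ℕ → ℝ → Set ℝ} (hQ : IsNestedIntervalQuantizer Q)
    {k : ℕ} {x y : ℝ} (h : x ∈ Q k y) : Q k x = Q k y := by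
  rcases hQ.2.2.1 k x y with h' | h'
  · exact h'
  · exact absurd (h'.ne_of_mem (hQ.1 k x) h) (by simp)

/-- Key deterministic lemma. -/
theorem ICS_det {Q : ℕ → ℝ → Set ℝ} (hQ : IsNestedIntervalQuantizer Q)
    (x : ℕ → ℝ) (J : ℕ)
    (hnest : ∀ j, J ≤ j → Q (j + 1) (x (j + 1)) ⊆ Q j (x j))
    (hT : ¬ Tendsto x atTop atTop) (hB : ¬ Tendsto x atTop atBot) :
    Tendsto (fun j => EMetric.diam (Q j (x j))) atTop (nhds 0) := by
  have hmono : ∀ j j', J ≤ j → j ≤ j' → Q j' (x j') ⊆ Q j (x j) := by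
    intro j j' hJ hle
    induction j' , hle using Nat.le_induction with
    | base => exact subset_rfl
    | succ m hm ih => exact (hnest m (hJ.trans hm)).trans ih
  by_contra hcon
  -- extract a positive lower bound on diameters
  rw [ENNReal.tendsto_nhds_zero] at hcon
  push_neg at hcon
  obtain ⟨ε, hε, hfreq⟩ := hcon
  have hlow : ∀ j, J ≤ j → ε < EMetric.diam (Q j (x j)) := by
    intro j hj
    obtain ⟨j', hj', hj''⟩ := (frequently_atTop.1 hfreq) j
    exact lt_of_lt_of_le hj'' (EMetric.diam_mono (hmono j j' hj hj'))
  set e : ℝ := (min ε 1).toReal with he_def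
  have hemin : (0:ℝ≥0∞) < min ε 1 := lt_min hε one_pos
  have heminne : min ε 1 ≠ ⊤ := ne_top_of_le_ne_top (by simp) (min_le_right _ _)
  have he : 0 < e := ENNReal.toReal_pos hemin.ne' heminne
  have hlow' : ∀ j, J ≤ j → ENNReal.ofReal e < EMetric.diam (Q j (x j)) := by
    intro j hj
    calc ENNReal.ofReal e = min ε 1 := ENNReal.ofReal_toReal heminne
    _ ≤ ε := min_le_left _ _
    _ < _ := hlow j hj
  -- a uniform bound K with points of Q j (x j) inside [-K, K]
  rw [tendsto_atTop] at hT
  push_neg at hT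
  obtain ⟨b, hb⟩ := hT
  
  rw [tendsto_atBot] at hB
  push_neg at hB
  obtain ⟨b', hb'⟩ := hB
  set K : ℝ := |b| + |b'| with hK_def
  have hK0 : 0 ≤ K := by positivity
  have hbK : b ≤ K := by
    have := le_abs_self b; have := abs_nonneg b'; simp only [hK_def]; linarith
  have hb'K : -K ≤ b' := by
    have := neg_abs_le b'; have := abs_nonneg b; simp only [hK_def]; linarith
  have hK : ∀ j, J ≤ j → ∃ z ∈ Q j (x j), |z| ≤ K := by
    intro j hj
    obtain ⟨j1, hj1, hxj1⟩ := (frequently_atTop.1 hb) j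
    obtain ⟨j2, hj2, hxj2⟩ := (frequently_atTop.1 hb') j
    have h1 : x j1 ∈ Q j (x j) := hmono j j1 hj hj1 (hQ.1 j1 (x j1))
    have h2 : x j2 ∈ Q j (x j) := hmono j j2 hj hj2 (hQ.1 j2 (x j2))
    by_cases hc1 : -K ≤ x j1
    · exact ⟨x j1, h1, abs_le.2 ⟨hc1, by linarith⟩⟩
    by_cases hc2 : x j2 ≤ K
    · exact ⟨x j2, h2, abs_le.2 ⟨by linarith, hc2⟩⟩
    · push_neg at hc1 hc2
      refine ⟨0, (hQ.2.1 j (x j)).out h1 h2 ⟨by linarith, by linarith⟩, by simpa using hK0⟩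
  -- compactness: a common closure point ys
  set A : ℕ → Set ℝ := fun m => closure (Q (J + m) (x (J + m))) ∩ Icc (-K) K with hA_def
  have hAne : ∀ m, (A m).Nonempty := by
    intro m
    obtain ⟨z, hz, hzK⟩ := hK (J + m) (Nat.le_add_right _ _)
    exact ⟨z, subset_closure hz, abs_le.1 hzK⟩
  have hAsub : ∀ m, A (m + 1) ⊆ A m := by
    intro m
    apply inter_subset_inter_left
    apply closure_mono
    have : J + (m + 1) = (J + m) + 1 := by omega
    rw [this]
    exact hnest (J + m) (Nat.le_add_right _ _)
  have hAclosed : ∀ m, IsClosed (A m) := fun m => isClosed_closure.inter isClosed_Icc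
  have hAcomp : IsCompact (A 0) := isCompact_Icc.inter_left isClosed_closure
  obtain ⟨ys, hys⟩ := IsCompact.nonempty_iInter_of_sequence_nonempty_isCompact_isClosed
    A hAsub hAne hAcomp hAclosed
  have hclos : ∀ j, J ≤ j → ys ∈ closure (Q j (x j)) := by
    intro j hj
    have h1 : ys ∈ A (j - J) := mem_iInter.1 hys (j - J)
    have hJ : J + (j - J) = j := by omega
    simp only [hA_def] at h1
    rw [hJ] at h1
    exact h1.1
  -- far points on one side
  have hfar : ∀ j, J ≤ j → ∃ p ∈ Q j (x j), e / 4 ≤ |p - ys| := by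
    intro j hj
    have hd := hlow' j hj
    have : ∃ u ∈ Q j (x j), ∃ v ∈ Q j (x j), ENNReal.ofReal (e / 2) < edist u v := by
      by_contra hno
      push_neg at hno
      have : EMetric.diam (Q j (x j)) ≤ ENNReal.ofReal (e / 2) := EMetric.diam_le hno
      have h2 : ENNReal.ofReal (e / 2) < ENNReal.ofReal e :=
        (ENNReal.ofReal_lt_ofReal_iff he).2 (by linarith)
      exact absurd (this.trans_lt (h2.trans hd)) (lt_irrefl _)
    obtain ⟨u, hu, v, hv, huv⟩ := this
    rw [edist_dist] at huv
    have huv' : e / 2 < dist u v :=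
      (ENNReal.ofReal_lt_ofReal_iff_of_nonneg (by linarith)).1 huv
    have htri : dist u v ≤ dist u ys + dist v ys := dist_triangle_right u v ys
    rcases le_or_gt (e / 4) (dist u ys) with h | h
    · exact ⟨u, hu, by rwa [Real.dist_eq] at h⟩
    · refine ⟨v, hv, ?_⟩
      rw [← Real.dist_eq]
      linarith
  -- consistent side
  have hUinherit : ∀ j j', J ≤ j → j ≤ j' →
      (∃ p ∈ Q j' (x j'), ys + e / 4 ≤ p) → (∃ p ∈ Q j (x j), ys + e / 4 ≤ p) := by
    rintro j j' hj hle ⟨p, hp, hp'⟩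
    exact ⟨p, hmono j j' hj hle hp, hp'⟩
  have hsides : ∀ j, J ≤ j → (∃ p ∈ Q j (x j), ys + e / 4 ≤ p) ∨
      (∃ p ∈ Q j (x j), p ≤ ys - e / 4) := by
    intro j hj
    obtain ⟨p, hp, hp'⟩ := hfar j hj
    rcases le_abs.1 hp' with h | h
    · exact Or.inl ⟨p, hp, by linarith⟩
    · exact Or.inr ⟨p, hp, by linarith⟩
  -- produce a common point y of all cells beyond some index
  have hcommon : ∃ J2, J ≤ J2 ∧ ∃ y : ℝ, ∀ j, J2 ≤ j → y ∈ Q j (x j) := by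
    have hw : ∀ j, J ≤ j → ∃ w ∈ Q j (x j), |w - ys| < e / 8 := by
      intro j hj
      obtain ⟨w, hw, hw'⟩ := Metric.mem_closure_iff.1 (hclos j hj) (e / 8) (by linarith)
      exact ⟨w, hw, by rw [← Real.dist_eq, dist_comm]; exact hw'⟩
    by_cases hU : ∀ j, J ≤ j → ∃ p ∈ Q j (x j), ys + e / 4 ≤ p
    · refine ⟨J, le_rfl, ys + e / 8, fun j hj => ?_⟩
      obtain ⟨w, hwm, hw'⟩ := hw j hj
      obtain ⟨p, hpm, hp'⟩ := hU j hj
      have h1 : w ≤ ys + e / 8 := by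
        have := abs_le.1 hw'.le; linarith [this.2]
      have h2 : ys + e / 8 ≤ p := by linarith
      exact (hQ.2.1 j (x j)).out hwm hpm ⟨h1, h2⟩
    · push_neg at hU
      obtain ⟨j1, hj1, hnoU⟩ := hU
      refine ⟨j1, hj1, ys - e / 8, fun j hj => ?_⟩
      have hD : ∃ p ∈ Q j (x j), p ≤ ys - e / 4 := by
        rcases hsides j (hj1.trans hj) with h | h
        · obtain ⟨p, hpm, hp'⟩ := hUinherit j1 j hj1 hj h
          exact absurd hp' (not_le.2 (hnoU p hpm))
        · exact h
      obtain ⟨w, hwm, hw'⟩ := hw j (hj1.trans hj)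
      obtain ⟨p, hpm, hp'⟩ := hD
      have h1 : p ≤ ys - e / 8 := by linarith
      have h2 : ys - e / 8 ≤ w := by
        have := abs_le.1 hw'.le; linarith [this.1]
      exact (hQ.2.1 j (x j)).out hpm hwm ⟨h1, h2⟩
  obtain ⟨J2, hJ2, y, hy⟩ := hcommon
  have heq : ∀ j, J2 ≤ j → EMetric.diam (Q j (x j)) = EMetric.diam (Q j y) := by
    intro j hj
    rw [ICS_cell_eq_of_mem hQ (hy j hj)]
  have : Tendsto (fun j => EMetric.diam (Q j (x j))) atTop (nhds 0) := by
    apply Tendsto.congr' _ (hQ.2.2.2.2.2 y)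
    filter_upwards [eventually_ge_atTop J2] with j hj
    exact (heq j hj).symm
  rw [ENNReal.tendsto_nhds_zero] at this
  obtain ⟨j, hj, hj'⟩ := ((this ε hε).and (eventually_ge_atTop (max J J2))).exists
  exact absurd (hlow j (le_trans (le_max_left _ _) hj')) (not_lt.2 hj)

/-! ### Path space machinery -/

def ICS_Sh (t : ℤ) (y : ℤ → ℝ) : ℤ → ℝ := fun n => y (n + t)

lemma ICS_Sh_measurable (t : ℤ) : Measurable (ICS_Sh t) :=
  measurable_pi_lambda _ fun n => measurable_pi_apply _

lemma ICS_Sh_Sh (a b : ℤ) (y : ℤ → ℝ) : ICS_Sh a (ICS_Sh b y) = ICS_Sh (a + b) y := by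
  funext n; simp [ICS_Sh, add_assoc]

lemma ICS_Sh_zero (y : ℤ → ℝ) : ICS_Sh 0 y = y := by funext n; simp [ICS_Sh]

def ICS_EtSet (Q : ℕ → ℝ → Set ℝ) (l : ℕ → ℕ) (k : ℕ) (y : ℤ → ℝ) : Set ℕ :=
  {t | 0 < t ∧ ∀ i < l k, Q k (y ((t : ℤ) - i)) = Q k (y (-(i : ℤ)))}

def ICS_Et (Q : ℕ → ℝ → Set ℝ) (l : ℕ → ℕ) (k : ℕ) (y : ℤ → ℝ) : ℕ :=
  sInf (ICS_EtSet Q l k y)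

def ICS_Tk (Q : ℕ → ℝ → Set ℝ) (l : ℕ → ℕ) (k : ℕ) (y : ℤ → ℝ) : ℤ → ℝ :=
  ICS_Sh (ICS_Et Q l k y) y

lemma ICS_zero_not_mem_EtSet (Q : ℕ → ℝ → Set ℝ) (l : ℕ → ℕ) (k : ℕ) (y : ℤ → ℝ) :
    0 ∉ ICS_EtSet Q l k y := fun h => absurd h.1 (lt_irrefl 0)

lemma ICS_sInf_eq_zero_iff {S : Set ℕ} (h0 : 0 ∉ S) : sInf S = 0 ↔ ∀ s, s ∉ S := by
  rw [Nat.sInf_eq_zero]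
  constructor
  · rintro (h | h)
    · exact absurd h h0
    · intro s; rw [h]; exact notMem_empty s
  · intro h; right; ext s; simp [h s]

lemma ICS_sInf_eq_pos_iff {S : Set ℕ} {t : ℕ} (ht : 0 < t) :
    sInf S = t ↔ t ∈ S ∧ ∀ s < t, s ∉ S := by
  constructor
  · intro h
    have hne : S.Nonempty := by
      by_contra hne
      rw [not_nonempty_iff_eq_empty] at hne
      rw [hne, Nat.sInf_empty] at h; omega
    refine ⟨h ▸ Nat.sInf_mem hne, fun s hs => Nat.notMem_of_lt_sInf (h ▸ hs)⟩
  · rintro ⟨hmem, hmin⟩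
    refine le_antisymm (Nat.sInf_le hmem) (not_lt.1 fun hlt => ?_)
    exact hmin _ hlt (Nat.sInf_mem ⟨t, hmem⟩)

lemma ICS_meas_match {Q : ℕ → ℝ → Set ℝ} (hQ : IsNestedIntervalQuantizer Q) (k : ℕ)
    (a b : ℤ) : MeasurableSet {y : ℤ → ℝ | Q k (y a) = Q k (y b)} := by
  have hset : {y : ℤ → ℝ | Q k (y a) = Q k (y b)} =
      ⋃ C ∈ Set.range (Q k), ((fun y : ℤ → ℝ => y a) ⁻¹' C ∩ (fun y : ℤ → ℝ => y b) ⁻¹' C) := by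
    ext y
    simp only [mem_setOf_eq, mem_iUnion, mem_inter_iff, mem_preimage, exists_prop]
    constructor
    · intro h
      exact ⟨Q k (y a), ⟨y a, rfl⟩, hQ.1 k (y a), h ▸ hQ.1 k (y b)⟩
    · rintro ⟨C, ⟨w, rfl⟩, h1, h2⟩
      rw [ICS_cell_eq_of_mem hQ h1, ICS_cell_eq_of_mem hQ h2]
  rw [hset]
  refine MeasurableSet.biUnion (hQ.2.2.2.1 k) ?_
  rintro C ⟨w, rfl⟩
  have hC : MeasurableSet (Q k w) := (hQ.2.1 k w).measurableSet
  exact ((measurable_pi_apply a) hC).inter ((measurable_pi_apply b) hC)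

lemma ICS_meas_mem_EtSet {Q : ℕ → ℝ → Set ℝ} (hQ : IsNestedIntervalQuantizer Q)
    (l : ℕ → ℕ) (k t : ℕ) : MeasurableSet {y : ℤ → ℝ | t ∈ ICS_EtSet Q l k y} := by
  by_cases ht : 0 < t
  · have : {y : ℤ → ℝ | t ∈ ICS_EtSet Q l k y} =
        ⋂ i ∈ {i : ℕ | i < l k}, {y : ℤ → ℝ | Q k (y ((t : ℤ) - i)) = Q k (y (-(i : ℤ)))} := by
      ext y
      simp [ICS_EtSet, ht]
    rw [this]
    exact MeasurableSet.biInter (to_countable _) fun i _ => ICS_meas_match hQ k _ _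
  · have : {y : ℤ → ℝ | t ∈ ICS_EtSet Q l k y} = ∅ := by
      ext y; simp [ICS_EtSet, ht]
    rw [this]; exact MeasurableSet.empty

lemma ICS_meas_Et_eq {Q : ℕ → ℝ → Set ℝ} (hQ : IsNestedIntervalQuantizer Q)
    (l : ℕ → ℕ) (k t : ℕ) : MeasurableSet {y : ℤ → ℝ | ICS_Et Q l k y = t} := by
  rcases Nat.eq_zero_or_pos t with rfl | ht
  · have : {y : ℤ → ℝ | ICS_Et Q l k y = 0} =
        ⋂ s : ℕ, {y : ℤ → ℝ | s ∈ ICS_EtSet Q l k y}ᶜ := by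
      ext y
      simp only [mem_setOf_eq, ICS_Et, mem_iInter, mem_compl_iff,
        ICS_sInf_eq_zero_iff (ICS_zero_not_mem_EtSet Q l k y)]
    rw [this]
    exact MeasurableSet.iInter fun s => (ICS_meas_mem_EtSet hQ l k s).compl
  · have : {y : ℤ → ℝ | ICS_Et Q l k y = t} =
        {y : ℤ → ℝ | t ∈ ICS_EtSet Q l k y} ∩
          ⋂ s ∈ {s : ℕ | s < t}, {y : ℤ → ℝ | s ∈ ICS_EtSet Q l k y}ᶜ := by
      ext y
      simp only [mem_setOf_eq, ICS_Et, ICS_sInf_eq_pos_iff ht, mem_inter_iff, mem_iInter,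
        mem_compl_iff, mem_setOf_eq]
    rw [this]
    exact (ICS_meas_mem_EtSet hQ l k t).inter
      (MeasurableSet.biInter (to_countable _) fun s _ => (ICS_meas_mem_EtSet hQ l k s).compl)

lemma ICS_meas_Tk {Q : ℕ → ℝ → Set ℝ} (hQ : IsNestedIntervalQuantizer Q)
    (l : ℕ → ℕ) (k : ℕ) : Measurable (ICS_Tk Q l k) := by
  apply measurable_pi_lambda
  intro n
  intro A hA
  have : (fun y : ℤ → ℝ => ICS_Tk Q l k y n) ⁻¹' A =
      ⋃ t : ℕ, ({y : ℤ → ℝ | ICS_Et Q l k y = t} ∩ (fun y : ℤ → ℝ => y (n + t)) ⁻¹' A) := by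
    ext y
    simp only [mem_preimage, mem_iUnion, mem_inter_iff, mem_setOf_eq]
    constructor
    · intro h
      exact ⟨ICS_Et Q l k y, rfl, h⟩
    · rintro ⟨t, ht, h⟩
      simpa [ICS_Tk, ICS_Sh, ht] using h
  rw [this]
  exact MeasurableSet.iUnion fun t =>
    (ICS_meas_Et_eq hQ l k t).inter ((measurable_pi_apply _) hA)

lemma ICS_Sh_invariant {ν : Measure (ℤ → ℝ)} (h1 : Measure.map (ICS_Sh 1) ν = ν) :
    ∀ t : ℤ, Measure.map (ICS_Sh t) ν = ν := by
  have hnat : ∀ n : ℕ, Measure.map (ICS_Sh (n : ℤ)) ν = ν := by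
    intro n
    induction n with
    | zero =>
      have : ICS_Sh (0 : ℤ) = id := funext ICS_Sh_zero
      simp [this]
    | succ n ih =>
      have hcomp : ICS_Sh ((n + 1 : ℕ) : ℤ) = ICS_Sh (n : ℤ) ∘ ICS_Sh 1 := by
        funext y; rw [Function.comp_apply, ICS_Sh_Sh]; push_cast; ring_nf
      rw [hcomp, ← Measure.map_map (ICS_Sh_measurable _) (ICS_Sh_measurable _), h1, ih]
  intro t
  rcases Int.eq_nat_or_neg t with ⟨n, rfl | rfl⟩
  · exact hnat n
  · have hcomp : ICS_Sh (-(n : ℤ)) ∘ ICS_Sh (n : ℤ) = id := by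
      funext y; rw [Function.comp_apply, ICS_Sh_Sh]; simp [ICS_Sh_zero]
    calc Measure.map (ICS_Sh (-(n : ℤ))) ν
        = Measure.map (ICS_Sh (-(n : ℤ))) (Measure.map (ICS_Sh (n : ℤ)) ν) := by rw [hnat n]
      _ = Measure.map (ICS_Sh (-(n : ℤ)) ∘ ICS_Sh (n : ℤ)) ν :=
          Measure.map_map (ICS_Sh_measurable _) (ICS_Sh_measurable _)
      _ = ν := by rw [hcomp, Measure.map_id]

/-! ### Poincaré recurrence -/

lemma ICS_Sh_one_iterate (t : ℕ) (y : ℤ → ℝ) : (ICS_Sh 1)^[t] y = ICS_Sh (t : ℤ) y := by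
  induction t with
  | zero => simp [ICS_Sh_zero]
  | succ t ih =>
    rw [Function.iterate_succ_apply', ih, ICS_Sh_Sh]
    norm_num [add_comm]

lemma ICS_Sh_negone_iterate (t : ℕ) (y : ℤ → ℝ) :
    (ICS_Sh (-1))^[t] y = ICS_Sh (-(t : ℤ)) y := by
  induction t with
  | zero => simp [ICS_Sh_zero]
  | succ t ih =>
    rw [Function.iterate_succ_apply', ih, ICS_Sh_Sh]
    congr 1
    push_cast
    ring

lemma ICS_ae_recurrence {Q : ℕ → ℝ → Set ℝ} (hQ : IsNestedIntervalQuantizer Q)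
    (l : ℕ → ℕ) (k : ℕ) {ν : Measure (ℤ → ℝ)} [IsProbabilityMeasure ν]
    (hν : ∀ t : ℤ, Measure.map (ICS_Sh t) ν = ν) :
    (∀ᵐ y ∂ν, (ICS_EtSet Q l k y).Nonempty) ∧
    (∀ᵐ y ∂ν, ∃ t : ℕ, 0 < t ∧
      ∀ i < l k, Q k (y (-(t : ℤ) - i)) = Q k (y (-(i : ℤ)))) := by
  set P : Set (Fin (l k) → Set ℝ) := {p | ∀ i, p i ∈ Set.range (Q k)} with hP_def
  have hPc : P.Countable := Set.countable_pi fun i => hQ.2.2.2.1 k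
  set B : (Fin (l k) → Set ℝ) → Set (ℤ → ℝ) :=
    fun p => {y | ∀ i : Fin (l k), y (-(i : ℤ)) ∈ p i} with hB_def
  have hBm : ∀ p ∈ P, MeasurableSet (B p) := by
    intro p hp
    have : B p = ⋂ i : Fin (l k), (fun y : ℤ → ℝ => y (-(i : ℤ))) ⁻¹' (p i) := by
      ext y; simp [hB_def]
    rw [this]
    refine MeasurableSet.iInter fun i => ?_
    obtain ⟨w, hw⟩ := hp i
    exact (measurable_pi_apply _) (hw ▸ (hQ.2.1 k w).measurableSet)
  have hpat : ∀ y : ℤ → ℝ, (fun i : Fin (l k) => Q k (y (-(i : ℤ)))) ∈ P ∧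
      y ∈ B (fun i : Fin (l k) => Q k (y (-(i : ℤ)))) :=
    fun y => ⟨fun i => ⟨_, rfl⟩, fun i => hQ.1 k _⟩
  constructor
  · have mp1 : MeasurePreserving (ICS_Sh 1) ν ν := ⟨ICS_Sh_measurable 1, hν 1⟩
    have h1 := (ae_ball_iff hPc).2 fun p hp =>
      mp1.conservative.ae_mem_imp_frequently_image_mem (hBm p hp).nullMeasurableSet
    filter_upwards [h1] with y hy
    obtain ⟨hp, hyB⟩ := hpat y
    obtain ⟨t, ht1, htB⟩ := frequently_atTop.1 (hy _ hp hyB) 1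
    refine ⟨t, ht1, fun i hi => ?_⟩
    have hm := htB ⟨i, hi⟩
    rw [ICS_Sh_one_iterate] at hm
    have hm' : y (-(i : ℤ) + (t : ℤ)) ∈ Q k (y (-(i : ℤ))) := hm
    rw [show (-(i : ℤ) + (t : ℤ)) = ((t : ℤ) - i) by ring] at hm'
    exact ICS_cell_eq_of_mem hQ hm'
  · have mp1 : MeasurePreserving (ICS_Sh (-1)) ν ν := ⟨ICS_Sh_measurable _, hν (-1)⟩
    have h1 := (ae_ball_iff hPc).2 fun p hp =>
      mp1.conservative.ae_mem_imp_frequently_image_mem (hBm p hp).nullMeasurableSet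
    filter_upwards [h1] with y hy
    obtain ⟨hp, hyB⟩ := hpat y
    obtain ⟨t, ht1, htB⟩ := frequently_atTop.1 (hy _ hp hyB) 1
    refine ⟨t, ht1, fun i hi => ?_⟩
    have hm := htB ⟨i, hi⟩
    rw [ICS_Sh_negone_iterate] at hm
    have hm' : y (-(i : ℤ) + -(t : ℤ)) ∈ Q k (y (-(i : ℤ))) := hm
    rw [show (-(i : ℤ) + -(t : ℤ)) = (-(t : ℤ) - i) by ring] at hm'
    exact ICS_cell_eq_of_mem hQ hm'

/-! ### The shifted-recurrence map preserves the law -/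

lemma ICS_G_disj {Q : ℕ → ℝ → Set ℝ} (hQ : IsNestedIntervalQuantizer Q)
    (l : ℕ → ℕ) (k : ℕ) {s t : ℕ} (hs : 0 < s) (hst : s < t) (y : ℤ → ℝ)
    (hGs : ICS_Et Q l k (ICS_Sh (-(s : ℤ)) y) = s)
    (hGt : ICS_Et Q l k (ICS_Sh (-(t : ℤ)) y) = t) : False := by
  have ht0 : 0 < t := hs.trans hst
  have hsmem := ((ICS_sInf_eq_pos_iff hs).1 hGs).1
  have htdec := (ICS_sInf_eq_pos_iff ht0).1 hGt
  have htmem := htdec.1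
  apply htdec.2 (t - s) (by omega)
  simp only [ICS_EtSet, ICS_Sh, mem_setOf_eq] at hsmem htmem ⊢
  refine ⟨by omega, fun i hi => ?_⟩
  have h1 := (hsmem.2 i hi)
  have h2 := (htmem.2 i hi)
  rw [show ((s : ℤ) - i + -(s : ℤ)) = -(i : ℤ) by ring] at h1
  rw [show ((t : ℤ) - i + -(t : ℤ)) = -(i : ℤ) by ring] at h2
  rw [show (((t - s : ℕ) : ℤ) - i + -(t : ℤ)) = (-(i : ℤ) + -(s : ℤ)) by omega]
  rw [h1.symm.trans h2]

set_option maxHeartbeats 1000000 in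
lemma ICS_Tk_preserving {Q : ℕ → ℝ → Set ℝ} (hQ : IsNestedIntervalQuantizer Q)
    (l : ℕ → ℕ) (k : ℕ) {ν : Measure (ℤ → ℝ)} [IsProbabilityMeasure ν]
    (hν : ∀ t : ℤ, Measure.map (ICS_Sh t) ν = ν) :
    Measure.map (ICS_Tk Q l k) ν = ν := by
  ext A hA
  rw [Measure.map_apply (ICS_meas_Tk hQ l k) hA]
  set G : ℕ → Set (ℤ → ℝ) :=
    fun t => ICS_Sh (-(t : ℤ)) ⁻¹' {y | ICS_Et Q l k y = t} with hG_def
  have hGm : ∀ t, MeasurableSet (G t) :=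
    fun t => (ICS_Sh_measurable _) (ICS_meas_Et_eq hQ l k t)
  set C : ℕ → Set (ℤ → ℝ) :=
    fun t => {y | ICS_Et Q l k y = t} ∩ ICS_Tk Q l k ⁻¹' A with hC_def
  have hCm : ∀ t, MeasurableSet (C t) :=
    fun t => (ICS_meas_Et_eq hQ l k t).inter ((ICS_meas_Tk hQ l k) hA)
  have hcover : ICS_Tk Q l k ⁻¹' A = ⋃ t : ℕ, C t := by
    ext y
    simp only [hC_def, mem_iUnion, mem_inter_iff, mem_setOf_eq, mem_preimage]
    exact ⟨fun h => ⟨ICS_Et Q l k y, rfl, h⟩, fun ⟨t, ht, h⟩ => h⟩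
  have hCdisj : Pairwise (Function.onFun Disjoint C) := by
    intro a b hab
    simp only [Function.onFun, hC_def]
    apply Set.disjoint_left.2
    rintro y ⟨h1, -⟩ ⟨h2, -⟩
    exact hab (h1 ▸ h2 ▸ rfl)
  rw [hcover, measure_iUnion hCdisj hCm, tsum_eq_zero_add' ENNReal.summable]
  have hC0 : ν (C 0) = 0 := by
    have hae := (ICS_ae_recurrence hQ l k hν).1
    rw [ae_iff] at hae
    refine measure_mono_null ?_ hae
    rintro y ⟨h1, -⟩
    simp only [mem_setOf_eq, not_nonempty_iff_eq_empty]
    rw [mem_setOf_eq, ICS_Et, ICS_sInf_eq_zero_iff (ICS_zero_not_mem_EtSet Q l k y)] at h1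
    exact eq_empty_iff_forall_notMem.2 h1
  have hCt : ∀ t : ℕ, ν (C (t + 1)) = ν (G (t + 1) ∩ A) := by
    intro t
    have hpre : C (t + 1) = ICS_Sh ((t + 1 : ℕ) : ℤ) ⁻¹' (G (t + 1) ∩ A) := by
      ext y
      have hinv : ICS_Sh (-((t + 1 : ℕ) : ℤ)) (ICS_Sh ((t + 1 : ℕ) : ℤ) y) = y := by
        rw [ICS_Sh_Sh, show (-((t + 1 : ℕ) : ℤ) + ((t + 1 : ℕ) : ℤ)) = 0 by ring, ICS_Sh_zero]
      simp only [hC_def, hG_def, mem_inter_iff, mem_preimage, mem_setOf_eq, hinv]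
      constructor
      · rintro ⟨h1, h2⟩
        refine ⟨h1, ?_⟩
        have : ICS_Tk Q l k y = ICS_Sh ((t + 1 : ℕ) : ℤ) y := by
          rw [ICS_Tk, h1]
        rwa [this] at h2
      · rintro ⟨h1, h2⟩
        refine ⟨h1, ?_⟩
        have : ICS_Tk Q l k y = ICS_Sh ((t + 1 : ℕ) : ℤ) y := by
          rw [ICS_Tk, h1]
        rwa [this]
    rw [hpre, ← Measure.map_apply (ICS_Sh_measurable _) ((hGm (t + 1)).inter hA),
      hν ((t + 1 : ℕ) : ℤ)]
  have hGdisj : Pairwise (Function.onFun Disjoint fun t : ℕ => G (t + 1) ∩ A) := by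
    intro a b hab
    simp only [Function.onFun]
    apply Set.disjoint_left.2
    rintro y ⟨h1, -⟩ ⟨h2, -⟩
    simp only [hG_def, mem_preimage, mem_setOf_eq] at h1 h2
    rcases lt_or_gt_of_ne hab with h | h
    · exact ICS_G_disj hQ l k (Nat.succ_pos a) (by omega) y h1 h2
    · exact ICS_G_disj hQ l k (Nat.succ_pos b) (by omega) y h2 h1
  have hsum : ∑' t : ℕ, ν (C (t + 1)) = ν (⋃ t : ℕ, (G (t + 1) ∩ A)) := by
    rw [measure_iUnion hGdisj fun t => (hGm _).inter hA]
    exact tsum_congr hCt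
  have hUc : ν ((⋃ t : ℕ, G (t + 1))ᶜ) = 0 := by
    have hae := (ICS_ae_recurrence hQ l k hν).2
    rw [ae_iff] at hae
    refine measure_mono_null ?_ hae
    intro y hy
    simp only [mem_compl_iff, mem_iUnion, not_exists] at hy
    simp only [mem_setOf_eq, not_exists]
    intro t0 ⟨ht0, hmatch⟩
    -- t0 > 0 with block(-t0) = block(0); take minimal such and contradict hy
    set S : Set ℕ := {t | 0 < t ∧ ∀ i < l k, Q k (y (-(t : ℤ) - i)) = Q k (y (-(i : ℤ)))}
      with hS_def
    have hSne : S.Nonempty := ⟨t0, ht0, hmatch⟩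
    have htS : sInf S ∈ S := Nat.sInf_mem hSne
    have htpos : 0 < sInf S := htS.1
    obtain ⟨t', ht'⟩ : ∃ t', sInf S = t' + 1 := ⟨sInf S - 1, by omega⟩
    rw [ht'] at htS
    apply hy t'
    simp only [hG_def, mem_preimage, mem_setOf_eq]
    rw [ICS_Et, ICS_sInf_eq_pos_iff (Nat.succ_pos t')]
    constructor
    · refine ⟨Nat.succ_pos t', fun i hi => ?_⟩
      simp only [ICS_Sh]
      rw [show (((t' + 1 : ℕ) : ℤ) - i + -((t' + 1 : ℕ) : ℤ)) = -(i : ℤ) by ring,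
        show (-(i : ℤ) + -((t' + 1 : ℕ) : ℤ)) = (-((t' + 1 : ℕ) : ℤ) - i) by ring]
      exact (htS.2 i hi).symm
    · intro s hs hsmem
      rcases Nat.eq_zero_or_pos s with rfl | hspos
      · exact absurd hsmem.1 (lt_irrefl 0)
      -- s ∈ EtSet (Sh (-(t'+1)) y) with 0 < s < t'+1 gives (t'+1) - s ∈ S, contradiction
      have hcon : (t' + 1) - s ∈ S := by
        refine ⟨by omega, fun i hi => ?_⟩
        have h1 := hsmem.2 i hi
        simp only [ICS_Sh] at h1
        have h2 := htS.2 i hi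
        rw [show ((s : ℤ) - i + -((t' + 1 : ℕ) : ℤ))
            = (-(((t' + 1) - s : ℕ) : ℤ) - i) by omega,
          show (-(i : ℤ) + -((t' + 1 : ℕ) : ℤ)) = (-((t' + 1 : ℕ) : ℤ) - i) by ring] at h1
        rw [h1, h2]
      have := Nat.sInf_le hcon
      omega
  have hfull : ν (⋃ t : ℕ, G (t + 1) ∩ A) = ν A := by
    rw [← iUnion_inter]
    refine le_antisymm (measure_mono inter_subset_right) ?_
    have hsub : A ⊆ ((⋃ t : ℕ, G (t + 1)) ∩ A) ∪ (⋃ t : ℕ, G (t + 1))ᶜ := by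
      intro y hy
      by_cases h : y ∈ ⋃ t : ℕ, G (t + 1)
      · exact Or.inl ⟨h, hy⟩
      · exact Or.inr h
    calc ν A ≤ ν (((⋃ t : ℕ, G (t + 1)) ∩ A) ∪ (⋃ t : ℕ, G (t + 1))ᶜ) := measure_mono hsub
      _ ≤ ν ((⋃ t : ℕ, G (t + 1)) ∩ A) + ν ((⋃ t : ℕ, G (t + 1))ᶜ) := measure_union_le _ _
      _ = ν ((⋃ t : ℕ, G (t + 1)) ∩ A) := by rw [hUc, add_zero]
  rw [hC0, zero_add, hsum, hfull]

end

set_option maxHeartbeats 1000000 in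
/-- For every fixed `n ≥ 0`, the partition cells `[X_{ζ_j − n}]^j` eventually form a
decreasing sequence of intervals whose diameters tend to `0` almost surely. -/
theorem intermittent_cells_shrink
    {Ω : Type*} [MeasurableSpace Ω] (μ : Measure Ω) [IsProbabilityMeasure μ]
    (X : ℤ → Ω → ℝ) (hXmeas : ∀ n, Measurable (X n)) (hstat : IsStationaryRealProcess μ X)
    (Q : ℕ → ℝ → Set ℝ) (hQ : IsNestedIntervalQuantizer Q)
    (l : ℕ → ℕ) (hl : GoodLengths l) :
    ∀ n : ℕ, ∀ᵐ ω ∂μ,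
      (∀ᶠ j in Filter.atTop,
        Q (j + 1) (X (recZeta Q l X (j + 1) ω - n) ω) ⊆ Q j (X (recZeta Q l X j ω - n) ω)) ∧
      Filter.Tendsto (fun j => EMetric.diam (Q j (X (recZeta Q l X j ω - n) ω)))
        Filter.atTop (nhds 0) := by
  intro n
  -- path space set-up
  set pth : Ω → (ℤ → ℝ) := fun ω m => X m ω with hpth_def
  have hpthm : Measurable pth := measurable_pi_lambda _ fun m => hXmeas m
  set ν : Measure (ℤ → ℝ) := Measure.map pth μ with hν_def
  haveI : IsProbabilityMeasure ν := Measure.isProbabilityMeasure_map hpthm.aemeasurable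
  have h1 : Measure.map (ICS_Sh 1) ν = ν := by
    rw [hν_def, Measure.map_map (ICS_Sh_measurable 1) hpthm]
    have heq : ICS_Sh 1 ∘ pth = fun ω (m : ℤ) => X (m + 1) ω := rfl
    rw [heq]
    exact hstat
  have hν : ∀ t : ℤ, Measure.map (ICS_Sh t) ν = ν := ICS_Sh_invariant h1
  -- the shifted path processes
  set Y : ℕ → Ω → (ℤ → ℝ) := fun j ω => ICS_Sh (recZeta Q l X j ω) (pth ω) with hY_def
  have hEta : ∀ (kk : ℕ) (b : ℤ) (ω : Ω),
      recEta Q l X kk b ω = ICS_Et Q l kk (ICS_Sh b (pth ω)) := by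
    intro kk b ω
    unfold recEta ICS_Et
    congr 1
    ext t
    simp only [ICS_EtSet, ICS_Sh, mem_setOf_eq, hpth_def]
    constructor
    · rintro ⟨ht, h⟩
      refine ⟨ht, fun i hi => ?_⟩
      rw [show ((t : ℤ) - i + b) = (b + t - i) by ring,
        show (-(i : ℤ) + b) = (b - i) by ring]
      exact h i hi
    · rintro ⟨ht, h⟩
      refine ⟨ht, fun i hi => ?_⟩
      have h2 := h i hi
      rwa [show ((t : ℤ) - i + b) = (b + t - i) by ring,
        show (-(i : ℤ) + b) = (b - i) by ring] at h2
  have hY0 : Y 0 = pth := by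
    funext ω
    simp only [hY_def]
    rw [show recZeta Q l X 0 ω = 0 from rfl, ICS_Sh_zero]
  have hYrec : ∀ j, Y (j + 1) = ICS_Tk Q l (j + 1) ∘ Y j := by
    intro j
    funext ω
    simp only [hY_def, Function.comp_apply, ICS_Tk]
    rw [← hEta (j + 1) _ ω, ICS_Sh_Sh]
    congr 1
    rw [show recZeta Q l X (j + 1) ω
      = recZeta Q l X j ω + recEta Q l X (j + 1) (recZeta Q l X j ω) ω from rfl]
    ring
  have hYm : ∀ j, Measurable (Y j) := by
    intro j
    induction j with
    | zero => rw [hY0]; exact hpthm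
    | succ j ih => rw [hYrec j]; exact (ICS_meas_Tk hQ l (j + 1)).comp ih
  have hYlaw : ∀ j, Measure.map (Y j) μ = ν := by
    intro j
    induction j with
    | zero => rw [hY0, hν_def]
    | succ j ih =>
      rw [hYrec j, ← Measure.map_map (ICS_meas_Tk hQ l (j + 1)) (hYm j), ih,
        ICS_Tk_preserving hQ l (j + 1) hν]
  have hXζ : ∀ (j : ℕ) (ω : Ω), X (recZeta Q l X j ω - n) ω = Y j ω (-(n : ℤ)) := by
    intro j ω
    simp only [hY_def, ICS_Sh, hpth_def]
    congr 1
    ring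
  -- the two null "escape to infinity" events
  have hmarg : ∀ (j : ℕ) (S : Set ℝ), MeasurableSet S →
      μ ((fun ω => Y j ω (-(n : ℤ))) ⁻¹' S) = ν ((fun y : ℤ → ℝ => y (-(n : ℤ))) ⁻¹' S) := by
    intro j S hS
    have : (fun ω => Y j ω (-(n : ℤ))) ⁻¹' S = Y j ⁻¹' ((fun y : ℤ → ℝ => y (-(n : ℤ))) ⁻¹' S) :=
      rfl
    rw [this, ← Measure.map_apply (hYm j) ((measurable_pi_apply _) hS), hYlaw j]
  have hNull : ∀ (F : Filter ℝ) (ES : ℕ → Set ℝ), (∀ M, MeasurableSet (ES M)) →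
      Antitone ES → (⋂ M : ℕ, ES M) = ∅ →
      (∀ (g : ℕ → ℝ), Tendsto g atTop F → ∀ M : ℕ, ∀ᶠ j in atTop, g j ∈ ES M) →
      μ {ω | Tendsto (fun j => X (recZeta Q l X j ω - n) ω) atTop F} = 0 := by
    intro F ES hESm hanti hiempty hev
    set PS : ℕ → Set (ℤ → ℝ) := fun M => (fun y : ℤ → ℝ => y (-(n : ℤ))) ⁻¹' ES M with hPS_def
    have hPSm : ∀ M, MeasurableSet (PS M) := fun M => (measurable_pi_apply _) (hESm M)
    have hPSanti : Antitone PS := fun M M' h => preimage_mono (hanti h)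
    have hPSempty : ⋂ M : ℕ, PS M = ∅ := by
      rw [hPS_def, ← preimage_iInter, hiempty, preimage_empty]
    have hc0 : Tendsto (fun M => ν (PS M)) atTop (nhds 0) := by
      have := tendsto_measure_iInter_atTop (μ := ν)
        (fun M => (hPSm M).nullMeasurableSet) hPSanti ⟨0, measure_ne_top ν _⟩
      rwa [hPSempty, measure_empty] at this
    have hle : ∀ M : ℕ,
        μ {ω | Tendsto (fun j => X (recZeta Q l X j ω - n) ω) atTop F} ≤ ν (PS M) := by
      intro M
      set AM : ℕ → Set Ω := fun j => (fun ω => Y j ω (-(n : ℤ))) ⁻¹' (ES M) with hAM_def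
      have hAMmeas : ∀ j, μ (AM j) = ν (PS M) := fun j => hmarg j (ES M) (hESm M)
      have hsub : {ω | Tendsto (fun j => X (recZeta Q l X j ω - n) ω) atTop F} ⊆
          ⋃ J : ℕ, ⋂ j : ℕ, AM (J + j) := by
        intro ω hω
        obtain ⟨J, hJ⟩ := eventually_atTop.1 (hev _ hω M)
        refine mem_iUnion.2 ⟨J, mem_iInter.2 fun j => ?_⟩
        simp only [hAM_def, mem_preimage]
        rw [← hXζ]
        exact hJ (J + j) (Nat.le_add_right _ _)
      have hdir : Directed (· ⊆ ·) fun J : ℕ => ⋂ j : ℕ, AM (J + j) := by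
        apply Monotone.directed_le
        intro J J' hJJ ω hω
        refine mem_iInter.2 fun j => ?_
        have := mem_iInter.1 hω (J' - J + j)
        rwa [show J + (J' - J + j) = J' + j by omega] at this
      calc μ {ω | Tendsto (fun j => X (recZeta Q l X j ω - n) ω) atTop F}
          ≤ μ (⋃ J : ℕ, ⋂ j : ℕ, AM (J + j)) := measure_mono hsub
        _ = ⨆ J : ℕ, μ (⋂ j : ℕ, AM (J + j)) := hdir.measure_iUnion
        _ ≤ ν (PS M) := iSup_le fun J => le_trans
            (measure_mono (iInter_subset _ 0)) (le_of_eq (hAMmeas (J + 0)))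
    exact le_antisymm (ge_of_tendsto' hc0 hle) (by positivity)
  have hTopNull : μ {ω | Tendsto (fun j => X (recZeta Q l X j ω - n) ω) atTop atTop} = 0 := by
    refine hNull atTop (fun M => Ici (M : ℝ)) (fun M => measurableSet_Ici)
      (fun M M' h => Ici_subset_Ici.2 (by exact_mod_cast h)) ?_ ?_
    · ext r
      simp only [mem_iInter, mem_Ici, mem_empty_iff_false, iff_false, not_forall, not_le]
      obtain ⟨M, hM⟩ := exists_nat_gt r
      exact ⟨M, hM⟩
    · intro g hg M
      exact (tendsto_atTop.1 hg) (M : ℝ)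
  have hBotNull : μ {ω | Tendsto (fun j => X (recZeta Q l X j ω - n) ω) atTop atBot} = 0 := by
    refine hNull atBot (fun M => Iic (-(M : ℝ))) (fun M => measurableSet_Iic)
      (fun M M' h => Iic_subset_Iic.2 (by simp; exact_mod_cast h)) ?_ ?_
    · ext r
      simp only [mem_iInter, mem_Iic, mem_empty_iff_false, iff_false, not_forall, not_le]
      obtain ⟨M, hM⟩ := exists_nat_gt (-r)
      exact ⟨M, by linarith⟩
    · intro g hg M
      exact (tendsto_atBot.1 hg) (-(M : ℝ))
  -- conclusion
  have hTopAE := measure_eq_zero_iff_ae_notMem.1 hTopNull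
  have hBotAE := measure_eq_zero_iff_ae_notMem.1 hBotNull
  filter_upwards [hTopAE, hBotAE] with ω hT hB
  obtain ⟨J0, hJ0⟩ := eventually_atTop.1 (hl.2.2.2.eventually_ge_atTop (n + 1))
  have hnest : ∀ j, J0 ≤ j →
      Q (j + 1) (X (recZeta Q l X (j + 1) ω - n) ω) ⊆ Q j (X (recZeta Q l X j ω - n) ω) := by
    intro j hj
    have hln : n < l (j + 1) := by
      have := hJ0 (j + 1) (by omega); omega
    set ζ := recZeta Q l X j ω with hζ_def
    have hζ1 : recZeta Q l X (j + 1) ω = ζ + recEta Q l X (j + 1) ζ ω := rfl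
    rcases eq_empty_or_nonempty
      {t : ℕ | 0 < t ∧ ∀ i < l (j + 1),
        Q (j + 1) (X (ζ + t - i) ω) = Q (j + 1) (X (ζ - i) ω)} with hS | hS
    · have h0 : recEta Q l X (j + 1) ζ ω = 0 := by
        unfold recEta
        rw [hS, Nat.sInf_empty]
      rw [hζ1, h0]
      rw [show (ζ + ((0 : ℕ) : ℤ) - n) = (ζ - n) by push_cast; ring]
      exact hQ.2.2.2.2.1 j _
    · have hmem : recEta Q l X (j + 1) ζ ω ∈
          {t : ℕ | 0 < t ∧ ∀ i < l (j + 1),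
            Q (j + 1) (X (ζ + t - i) ω) = Q (j + 1) (X (ζ - i) ω)} := Nat.sInf_mem hS
      have h2 := hmem.2 n hln
      rw [hζ1]
      rw [show (ζ + (recEta Q l X (j + 1) ζ ω : ℤ) - n)
        = (ζ + (recEta Q l X (j + 1) ζ ω : ℤ) - n) from rfl]
      calc Q (j + 1) (X (ζ + (recEta Q l X (j + 1) ζ ω : ℤ) - n) ω)
          = Q (j + 1) (X (ζ - n) ω) := h2
        _ ⊆ Q j (X (ζ - n) ω) := hQ.2.2.2.2.1 j _
  exact ⟨eventually_atTop.2 ⟨J0, hnest⟩,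
    ICS_det hQ (fun j => X (recZeta Q l X j ω - n) ω) J0 hnest hT hB⟩
end

section
/- Define X̃_{-n} = lim_{j→∞} X_{ζ_j - n} for each n ≥ 0 (the limit exists almost surely since the cells [X_{ζ_j-n}]^j are nested intervals with diameters tending to 0). Then the one-sided process (…, X̃_{-1}, X̃_0) has the same distribution as (…, X_{-1}, X_0). -/
open MeasureTheory Filter Set

noncomputable section

/-- Two-sided stationarity of a real valued process. -/
def IsStationaryReal {Ω : Type*} [MeasurableSpace Ω] (μ : Measure Ω) (X : ℤ → Ω → ℝ) : Prop :=
  Measure.map (fun ω (n : ℤ) => X (n + 1) ω) μ = Measure.map (fun ω (n : ℤ) => X n ω) μ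

variable {Ω : Type*}

end

noncomputable section IntermittentAux

namespace IntermittentAux

open MeasureTheory Filter Set

/-- Shift by `z` on two-sided sequences. -/
def zshift (z : ℤ) (y : ℤ → ℝ) : ℤ → ℝ := fun n => y (n + z)

lemma zshift_apply (z : ℤ) (y : ℤ → ℝ) (n : ℤ) : zshift z y n = y (n + z) := rfl

lemma zshift_zero (y : ℤ → ℝ) : zshift 0 y = y := funext fun n => congrArg y (add_zero n)

lemma zshift_add (a b : ℤ) (y : ℤ → ℝ) : zshift a (zshift b y) = zshift (a + b) y :=
  funext fun n => congrArg y (add_assoc n a b)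

lemma measurable_zshift (z : ℤ) : Measurable (zshift z) :=
  measurable_pi_lambda _ fun n => measurable_pi_apply (n + z)

lemma cell_eq_of_mem {Q : ℕ → ℝ → Set ℝ} (hQ : IsNestedIntervalQuantizer Q) {k : ℕ} {x w : ℝ}
    (hx : x ∈ Q k w) : Q k x = Q k w := by
  rcases hQ.2.2.1 k x w with h | h
  · exact h
  · exact absurd hx (Set.disjoint_left.mp h (hQ.1 k x))

lemma measurableSet_cellEq {Q : ℕ → ℝ → Set ℝ} (hQ : IsNestedIntervalQuantizer Q)
    (k : ℕ) (a b : ℤ) : MeasurableSet {y : ℤ → ℝ | Q k (y a) = Q k (y b)} := by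
  have hset : {y : ℤ → ℝ | Q k (y a) = Q k (y b)}
      = ⋃ C ∈ Set.range (Q k),
        ((fun y : ℤ → ℝ => y a) ⁻¹' C ∩ (fun y : ℤ → ℝ => y b) ⁻¹' C) := by
    ext y
    simp only [Set.mem_setOf_eq, Set.mem_iUnion, Set.mem_inter_iff, Set.mem_preimage,
      Set.mem_range, exists_prop]
    constructor
    · intro h
      exact ⟨Q k (y b), ⟨y b, rfl⟩, h ▸ hQ.1 k (y a), hQ.1 k (y b)⟩
    · rintro ⟨C, ⟨w, rfl⟩, ha, hb⟩
      exact (cell_eq_of_mem hQ ha).trans (cell_eq_of_mem hQ hb).symm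
  rw [hset]
  refine MeasurableSet.biUnion (hQ.2.2.2.1 k) ?_
  rintro C ⟨w, rfl⟩
  exact ((hQ.2.1 k w).measurableSet.preimage (measurable_pi_apply a)).inter
    ((hQ.2.1 k w).measurableSet.preimage (measurable_pi_apply b))

lemma sInf_pos_zero_iff {S : Set ℕ} (h0 : 0 ∉ S) : sInf S = 0 ↔ ∀ t, t ∉ S := by
  rw [Nat.sInf_eq_zero]
  constructor
  · rintro (h | h)
    · exact absurd h h0
    · simp [h]
  · intro h; right; ext t; simp [h t]

lemma sInf_eq_iff_of_pos {S : Set ℕ} {n : ℕ} (hn : 0 < n) :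
    sInf S = n ↔ n ∈ S ∧ ∀ m < n, m ∉ S := by
  constructor
  · intro h
    have hne : S.Nonempty := by
      by_contra hS
      rw [Set.not_nonempty_iff_eq_empty] at hS
      rw [hS, Nat.sInf_empty] at h; omega
    refine ⟨h ▸ Nat.sInf_mem hne, fun m hm hmS => ?_⟩
    have := Nat.sInf_le hmS; omega
  · rintro ⟨h1, h2⟩
    refine le_antisymm (Nat.sInf_le h1) (le_csInf ⟨n, h1⟩ fun b hb => ?_)
    by_contra hbn
    exact h2 b (by omega) hb

/-- Measurability of first hitting times. -/
lemma measurable_sInf_matching {α : Type*} [MeasurableSpace α] {M : ℕ → Set α}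
    (hM : ∀ t, MeasurableSet (M t)) :
    Measurable (fun a => sInf {t : ℕ | 0 < t ∧ a ∈ M t}) := by
  apply measurable_to_countable'
  intro t
  match t with
  | 0 =>
    have : (fun a => sInf {t : ℕ | 0 < t ∧ a ∈ M t}) ⁻¹' {0}
        = ⋂ (u : ℕ), ⋂ (_ : 0 < u), (M u)ᶜ := by
      ext a
      simp only [Set.mem_preimage, Set.mem_singleton_iff, Set.mem_iInter, Set.mem_compl_iff]
      rw [sInf_pos_zero_iff (by simp)]
      constructor
      · intro h u hu hau; exact h u ⟨hu, hau⟩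
      · rintro h u ⟨hu, hau⟩; exact h u hu hau
    rw [this]
    exact MeasurableSet.iInter fun u => MeasurableSet.iInter fun _ => (hM u).compl
  | n + 1 =>
    have : (fun a => sInf {t : ℕ | 0 < t ∧ a ∈ M t}) ⁻¹' {n + 1}
        = M (n + 1) ∩ ⋂ (u : ℕ), ⋂ (_ : 0 < u ∧ u < n + 1), (M u)ᶜ := by
      ext a
      simp only [Set.mem_preimage, Set.mem_singleton_iff, Set.mem_inter_iff, Set.mem_iInter,
        Set.mem_compl_iff]
      rw [sInf_eq_iff_of_pos (Nat.succ_pos n)]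
      constructor
      · rintro ⟨⟨-, h1⟩, h2⟩
        exact ⟨h1, fun u ⟨hu0, hun⟩ hau => h2 u hun ⟨hu0, hau⟩⟩
      · rintro ⟨h1, h2⟩
        exact ⟨⟨Nat.succ_pos n, h1⟩, fun m hm ⟨hm0, ham⟩ => h2 m ⟨hm0, hm⟩ ham⟩
    rw [this]
    exact (hM (n + 1)).inter
      (MeasurableSet.iInter fun u => MeasurableSet.iInter fun _ => (hM u).compl)

/-- A map defined by countable cases is measurable. -/
lemma measurable_apply_countable {α γ β : Type*} [MeasurableSpace α] [MeasurableSpace γ]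
    [Countable β] {g : α → β} {F : β → α → γ}
    (hg : ∀ b, MeasurableSet {a | g a = b}) (hF : ∀ b, Measurable (F b)) :
    Measurable fun a => F (g a) a := by
  intro s hs
  have : (fun a => F (g a) a) ⁻¹' s = ⋃ b, ({a | g a = b} ∩ F b ⁻¹' s) := by
    ext a
    simp only [Set.mem_preimage, Set.mem_iUnion, Set.mem_inter_iff, Set.mem_setOf_eq]
    constructor
    · intro h; exact ⟨g a, rfl, h⟩
    · rintro ⟨b, rfl, h⟩; exact h
  rw [this]
  exact MeasurableSet.iUnion fun b => (hg b).inter (hF b hs)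

end IntermittentAux

end IntermittentAux

namespace IntermittentAux

open MeasureTheory Filter Set

variable {α : Type*} [MeasurableSpace α]

/-- The key abstract lemma: shifting by the return time of the "equivalence class of the
present block" preserves the measure. -/
lemma measurePreserving_returnTimeShift
    (ν : Measure α) [IsProbabilityMeasure ν]
    (T : ℤ → α → α) (hT : ∀ z, MeasurePreserving (T z) ν ν)
    (hTadd : ∀ a b x, T a (T b x) = T (a + b) x) (hT0 : ∀ x, T 0 x = x)
    (E : α → α → Prop) (hEsymm : ∀ {x y}, E x y → E y x)
    (hEtrans : ∀ {x y z}, E x y → E y z → E x z)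
    (hEmeas : ∀ u : ℤ, MeasurableSet {y | E (T u y) y})
    {ι : Type*} [Countable ι] (A : ι → Set α) (hAmeas : ∀ m, MeasurableSet (A m))
    (hAcover : ∀ x, ∃ m, x ∈ A m) (hAclass : ∀ m x y, x ∈ A m → y ∈ A m → E x y) :
    MeasurePreserving (fun y => T (sInf {t : ℕ | 0 < t ∧ E (T (t : ℤ) y) y} : ℕ) y) ν ν := by
  classical
  set η : α → ℕ := fun y => sInf {t : ℕ | 0 < t ∧ E (T (t : ℤ) y) y} with hη_def
  -- basic facts about η
  have hη_pos : ∀ {y t}, η y = t → 0 < t →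
      E (T (t : ℤ) y) y ∧ ∀ m, 0 < m → m < t → ¬ E (T (m : ℤ) y) y := by
    intro y t ht hpos
    simp only [hη_def] at ht
    rw [sInf_eq_iff_of_pos hpos] at ht
    exact ⟨ht.1.2, fun m hm0 hmt hE => ht.2 m hmt ⟨hm0, hE⟩⟩
  have hη_zero : ∀ {y}, η y = 0 → ∀ t : ℕ, 0 < t → ¬ E (T (t : ℤ) y) y := by
    intro y hy t ht hE
    simp only [hη_def] at hy
    rw [sInf_pos_zero_iff (by simp)] at hy
    exact hy t ⟨ht, hE⟩
  -- measurability
  have hηmeas : Measurable η := by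
    have : η = fun y => sInf {t : ℕ | 0 < t ∧ y ∈ {z | E (T (t : ℤ) z) z}} := rfl
    rw [this]
    exact measurable_sInf_matching fun t => hEmeas (t : ℤ)
  have hηt : ∀ t : ℕ, MeasurableSet {y | η y = t} := fun t =>
    hηmeas (measurableSet_singleton t)
  have hRmeas : Measurable (fun y => T ((η y : ℕ) : ℤ) y) :=
    measurable_apply_countable (g := η) (F := fun t y => T ((t : ℕ) : ℤ) y) hηt
      (fun t => (hT t).measurable)
  -- iterates of T 1 and T (-1)
  have hit_fwd : ∀ (u : ℕ) (y : α), (T 1)^[u] y = T (u : ℤ) y := by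
    intro u
    induction u with
    | zero => intro y; simp [hT0]
    | succ n ih =>
      intro y
      rw [Function.iterate_succ_apply', ih, hTadd]
      congr 1
      push_cast; ring
  have hit_bwd : ∀ (u : ℕ) (y : α), (T (-1))^[u] y = T (-(u : ℤ)) y := by
    intro u
    induction u with
    | zero => intro y; simp [hT0]
    | succ n ih =>
      intro y
      rw [Function.iterate_succ_apply', ih, hTadd]
      congr 1
      push_cast; ring
  -- the backward non-recurrence set is null
  set NB : Set α := {z | ∀ t : ℕ, 0 < t → ¬ E (T (-(t : ℤ)) z) z} with hNB_def
  have hNB_null : ν NB = 0 := by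
    have hsub : NB ⊆ ⋃ m, {x | x ∈ A m ∧ ∀ u ≥ 1, (T (-1))^[u] x ∉ A m} := by
      intro z hz
      obtain ⟨m, hm⟩ := hAcover z
      refine Set.mem_iUnion.2 ⟨m, hm, fun u hu hmem => ?_⟩
      rw [hit_bwd] at hmem
      exact hz u hu (hAclass m _ _ hmem hm)
    refine measure_mono_null hsub (measure_iUnion_null fun m => ?_)
    exact ((hT (-1)).conservative).measure_mem_forall_ge_image_notMem_eq_zero
      (hAmeas m).nullMeasurableSet 1
  -- the forward non-recurrence set is null
  have hNF_null : ν {y | η y = 0} = 0 := by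
    have hsub : {y | η y = 0} ⊆ ⋃ m, {x | x ∈ A m ∧ ∀ u ≥ 1, (T 1)^[u] x ∉ A m} := by
      intro y hy
      obtain ⟨m, hm⟩ := hAcover y
      refine Set.mem_iUnion.2 ⟨m, hm, fun u hu hmem => ?_⟩
      rw [hit_fwd] at hmem
      exact hη_zero hy u hu (hAclass m _ _ hmem hm)
    refine measure_mono_null hsub (measure_iUnion_null fun m => ?_)
    exact ((hT 1).conservative).measure_mem_forall_ge_image_notMem_eq_zero
      (hAmeas m).nullMeasurableSet 1
  -- the backward level sets
  set K : ℕ → Set α := fun t => T (-(t : ℤ)) ⁻¹' {y | η y = t} with hK_def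
  have hKmeas : ∀ t, MeasurableSet (K t) := fun t => (hT _).measurable (hηt t)
  -- membership in K t for positive t, unfolded
  have hK_iff : ∀ (t : ℕ) (z : α), 0 < t → (z ∈ K t ↔
      (E (T (-(t : ℤ)) z) z ∧ ∀ m : ℕ, 0 < m → m < t → ¬ E (T (-(m : ℤ)) z) z)) := by
    intro t z ht
    constructor
    · intro hz
      have hz' : η (T (-(t : ℤ)) z) = t := hz
      obtain ⟨h1, h2⟩ := hη_pos hz' ht
      have e1 : T (t : ℤ) (T (-(t : ℤ)) z) = z := by
        rw [hTadd]
        have : (t : ℤ) + -(t : ℤ) = 0 := by ring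
        rw [this, hT0]
      rw [e1] at h1
      -- h1 : E z (T (-t) z)
      refine ⟨hEsymm h1, fun m hm0 hmt hEm => ?_⟩
      -- if E (T (-m) z) z with 0 < m < t, then (t - m) would be a smaller match for T (-t) z
      have hmt' : 0 < t - m := by omega
      have hlt : t - m < t := by omega
      refine h2 (t - m) hmt' hlt ?_
      have e2 : T ((t - m : ℕ) : ℤ) (T (-(t : ℤ)) z) = T (-(m : ℤ)) z := by
        rw [hTadd]; congr 1; push_cast [Nat.cast_sub hmt.le]; ring
      rw [e2]
      -- need E (T (-m) z) (T (-t) z); have E (T (-m) z) z and E z (T (-t) z)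
      exact hEtrans hEm h1
    · rintro ⟨h1, h2⟩
      show η (T (-(t : ℤ)) z) = t
      simp only [hη_def]
      rw [sInf_eq_iff_of_pos ht]
      constructor
      · refine ⟨ht, ?_⟩
        have e1 : T (t : ℤ) (T (-(t : ℤ)) z) = z := by
          rw [hTadd]
          have : (t : ℤ) + -(t : ℤ) = 0 := by ring
          rw [this, hT0]
        rw [e1]
        exact hEsymm h1
      · rintro m hmt ⟨hm0, hEm⟩
        have e2 : T ((m : ℕ) : ℤ) (T (-(t : ℤ)) z) = T (-((t - m : ℕ) : ℤ)) z := by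
          rw [hTadd]; congr 1; push_cast [Nat.cast_sub hmt.le]; ring
        rw [e2] at hEm
        -- hEm : E (T (-(t-m)) z) (T (-t) z); with h1 : E (T (-t) z) z get contradiction
        exact h2 (t - m) (by omega) (by omega) (hEtrans hEm h1)
  -- disjointness of the K t, t ≥ 1
  have hKdisj : ∀ s t : ℕ, 0 < s → s < t → Disjoint (K s) (K t) := by
    intro s t hs hst
    rw [Set.disjoint_left]
    intro z hzs hzt
    obtain ⟨hs1, -⟩ := (hK_iff s z hs).mp hzs
    obtain ⟨ht1, ht2⟩ := (hK_iff t z (by omega)).mp hzt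
    exact ht2 s hs (by omega) hs1
  -- covering: outside NB, z belongs to some K t with t ≥ 1
  have hKcover : ∀ z, z ∉ NB → ∃ t : ℕ, 0 < t ∧ z ∈ K t := by
    intro z hz
    rw [hNB_def] at hz
    simp only [Set.mem_setOf_eq, not_forall] at hz
    obtain ⟨t, ht, hE⟩ := hz
    rw [not_not] at hE
    set S' : Set ℕ := {u : ℕ | 0 < u ∧ E (T (-(u : ℤ)) z) z} with hS'_def
    have hS'ne : S'.Nonempty := ⟨t, ht, hE⟩
    obtain ⟨ht0, hE0⟩ := Nat.sInf_mem hS'ne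
    refine ⟨sInf S', ht0, (hK_iff _ z ht0).mpr ⟨hE0, fun m hm0 hmlt hEm => ?_⟩⟩
    exact absurd (Nat.sInf_le (show m ∈ S' from ⟨hm0, hEm⟩)) (by omega)
  -- now the main computation
  refine ⟨hRmeas, ?_⟩
  ext B hB
  rw [Measure.map_apply hRmeas hB]
  have hdecomp : (fun y => T ((η y : ℕ) : ℤ) y) ⁻¹' B
      = ⋃ t : ℕ, ({y | η y = t} ∩ T (t : ℤ) ⁻¹' B) := by
    ext y
    simp only [Set.mem_preimage, Set.mem_iUnion, Set.mem_inter_iff, Set.mem_setOf_eq]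
    constructor
    · intro h; exact ⟨η y, rfl, h⟩
    · rintro ⟨t, rfl, h⟩; exact h
  have hDmeas : ∀ t : ℕ, MeasurableSet ({y | η y = t} ∩ T (t : ℤ) ⁻¹' B) := fun t =>
    (hηt t).inter ((hT _).measurable hB)
  have hDdisj : Pairwise (Function.onFun Disjoint
      (fun t : ℕ => {y | η y = t} ∩ T (t : ℤ) ⁻¹' B)) := by
    intro s t hst
    rw [Function.onFun, Set.disjoint_left]
    rintro y ⟨hy1, -⟩ ⟨hy2, -⟩
    exact hst (hy1.symm.trans hy2)
  rw [hdecomp, measure_iUnion hDdisj hDmeas]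
  -- kill the t = 0 term
  have hsupp : Function.support (fun t : ℕ => ν ({y | η y = t} ∩ T (t : ℤ) ⁻¹' B))
      ⊆ Set.range Nat.succ := by
    intro t ht
    simp only [Function.mem_support] at ht
    match t with
    | 0 => exact absurd (measure_mono_null Set.inter_subset_left hNF_null) ht
    | n + 1 => exact ⟨n, rfl⟩
  have hsum : (∑' t : ℕ, ν ({y | η y = t} ∩ T (t : ℤ) ⁻¹' B))
      = ∑' t : ℕ, ν ({y | η y = t + 1} ∩ T ((t + 1 : ℕ) : ℤ) ⁻¹' B) := by
    rw [← Function.Injective.tsum_eq Nat.succ_injective hsupp]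
  rw [hsum]
  -- rewrite each term via the measure-preserving shift T (-(t+1))
  have hterm : ∀ t : ℕ, ν ({y | η y = t + 1} ∩ T ((t + 1 : ℕ) : ℤ) ⁻¹' B)
      = ν (K (t + 1) ∩ B) := by
    intro t
    rw [← (hT (-((t + 1 : ℕ) : ℤ))).measure_preimage (hDmeas (t + 1)).nullMeasurableSet]
    congr 1
    rw [Set.preimage_inter]
    congr 1
    rw [← Set.preimage_comp]
    have : T ((t + 1 : ℕ) : ℤ) ∘ T (-((t + 1 : ℕ) : ℤ)) = id := by
      funext z
      rw [Function.comp_apply, hTadd]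
      have : ((t + 1 : ℕ) : ℤ) + -((t + 1 : ℕ) : ℤ) = 0 := by ring
      rw [this, hT0]; rfl
    rw [this, Set.preimage_id]
  simp_rw [hterm]
  have hKdisj' : Pairwise (Function.onFun Disjoint (fun t : ℕ => K (t + 1) ∩ B)) := by
    intro s t hst
    rcases lt_or_gt_of_ne hst with h | h
    · exact (hKdisj (s + 1) (t + 1) (by omega) (by omega)).mono
        Set.inter_subset_left Set.inter_subset_left
    · exact ((hKdisj (t + 1) (s + 1) (by omega) (by omega)).symm).mono
        Set.inter_subset_left Set.inter_subset_left
  rw [← measure_iUnion hKdisj' (fun t => (hKmeas (t + 1)).inter hB)]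
  have hU : (⋃ t : ℕ, (K (t + 1) ∩ B)) = B ∩ ⋃ t : ℕ, K (t + 1) := by
    rw [← Set.iUnion_inter, Set.inter_comm]
  rw [hU]
  have hUm : MeasurableSet (⋃ t : ℕ, K (t + 1)) := MeasurableSet.iUnion fun t => hKmeas (t + 1)
  have hdiff : ν (B \ ⋃ t : ℕ, K (t + 1)) = 0 := by
    refine measure_mono_null (fun z hz => ?_) hNB_null
    rcases hz with ⟨hzB, hzU⟩
    by_contra hzNB
    obtain ⟨t, ht, hzK⟩ := hKcover z hzNB
    exact hzU (Set.mem_iUnion.2 ⟨t - 1, by rwa [show t - 1 + 1 = t by omega]⟩)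
  conv_rhs => rw [← measure_inter_add_diff B hUm]
  rw [hdiff, add_zero]

end IntermittentAux

namespace IntermittentAux

open MeasureTheory Filter Set

/-- The coordinate process on the canonical space. -/
def coordP : ℤ → (ℤ → ℝ) → ℝ := fun n y => y n

lemma measurePreserving_zshift (ν : Measure (ℤ → ℝ))
    (h1 : Measure.map (zshift 1) ν = ν) : ∀ z : ℤ, MeasurePreserving (zshift z) ν ν := by
  have mp1 : MeasurePreserving (zshift 1) ν ν := ⟨measurable_zshift 1, h1⟩
  have mpn : ∀ n : ℕ, MeasurePreserving (zshift (n : ℤ)) ν ν := by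
    intro n
    induction n with
    | zero =>
      have : zshift ((0 : ℕ) : ℤ) = id := funext fun y => zshift_zero y
      rw [this]; exact MeasurePreserving.id ν
    | succ n ih =>
      have : zshift ((n + 1 : ℕ) : ℤ) = zshift 1 ∘ zshift (n : ℤ) := by
        funext y
        rw [Function.comp_apply, zshift_add]
        congr 1; push_cast; ring
      rw [this]; exact mp1.comp ih
  have mpm1 : MeasurePreserving (zshift (-1)) ν ν := by
    refine ⟨measurable_zshift _, ?_⟩
    have hcomp : zshift (-1) ∘ zshift 1 = id := by
      funext y; rw [Function.comp_apply, zshift_add]; norm_num [zshift_zero]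
    calc Measure.map (zshift (-1)) ν
        = Measure.map (zshift (-1)) (Measure.map (zshift 1) ν) := by rw [h1]
      _ = Measure.map (zshift (-1) ∘ zshift 1) ν :=
          Measure.map_map (measurable_zshift (-1)) (measurable_zshift 1)
      _ = ν := by rw [hcomp, Measure.map_id]
  have mpnn : ∀ n : ℕ, MeasurePreserving (zshift (-(n : ℤ))) ν ν := by
    intro n
    induction n with
    | zero =>
      have : zshift (-((0 : ℕ) : ℤ)) = id := funext fun y => by
        simpa using zshift_zero y
      rw [this]; exact MeasurePreserving.id ν
    | succ n ih =>
      have : zshift (-((n + 1 : ℕ) : ℤ)) = zshift (-1) ∘ zshift (-(n : ℤ)) := by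
        funext y
        rw [Function.comp_apply, zshift_add]
        congr 1; push_cast; ring
      rw [this]; exact mpm1.comp ih
  intro z
  obtain ⟨n, rfl | rfl⟩ := Int.eq_nat_or_neg z
  · exact mpn n
  · exact mpnn n

variable {Q : ℕ → ℝ → Set ℝ} {l : ℕ → ℕ}

lemma measurable_recEta (hQ : IsNestedIntervalQuantizer Q) (k : ℕ) (b : ℤ) :
    Measurable (recEta Q l coordP k b) := by
  have : recEta Q l coordP k b = fun y => sInf {t : ℕ | 0 < t ∧
      y ∈ {z : ℤ → ℝ | ∀ i < l k, Q k (z (b + t - i)) = Q k (z (b - i))}} := rfl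
  rw [this]
  refine measurable_sInf_matching fun t => ?_
  have : {z : ℤ → ℝ | ∀ i < l k, Q k (z (b + t - i)) = Q k (z (b - i))}
      = ⋂ (i : ℕ), ⋂ (_ : i < l k), {z : ℤ → ℝ | Q k (z (b + t - i)) = Q k (z (b - i))} := by
    ext z; simp only [Set.mem_setOf_eq, Set.mem_iInter]
  rw [this]
  exact MeasurableSet.iInter fun i => MeasurableSet.iInter fun _ =>
    measurableSet_cellEq hQ k _ _

lemma measurable_recZeta (hQ : IsNestedIntervalQuantizer Q) (j : ℕ) :
    Measurable (recZeta Q l coordP j) := by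
  induction j with
  | zero => exact measurable_const
  | succ j ih =>
    have : recZeta Q l coordP (j + 1)
        = fun y => (fun b z => b + (recEta Q l coordP (j + 1) b z : ℤ))
            (recZeta Q l coordP j y) y := rfl
    rw [this]
    refine measurable_apply_countable (g := recZeta Q l coordP j)
      (F := fun b z => b + (recEta Q l coordP (j + 1) b z : ℤ))
      (fun b => ih (measurableSet_singleton b)) fun b => ?_
    exact (measurable_from_top.comp (measurable_recEta hQ (j + 1) b)).const_add b

lemma recEta_zshift (k : ℕ) (b : ℤ) (y : ℤ → ℝ) :
    recEta Q l coordP k 0 (zshift b y) = recEta Q l coordP k b y := by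
  unfold recEta
  congr 1
  ext t
  simp only [Set.mem_setOf_eq, coordP, zshift_apply]
  constructor
  · rintro ⟨ht, h⟩
    refine ⟨ht, fun i hi => ?_⟩
    have := h i hi
    rwa [show (0 : ℤ) + t - i + b = b + t - i by ring,
      show (0 : ℤ) - i + b = b - i by ring] at this
  · rintro ⟨ht, h⟩
    refine ⟨ht, fun i hi => ?_⟩
    have := h i hi
    rwa [show (0 : ℤ) + t - i + b = b + t - i by ring,
      show (0 : ℤ) - i + b = b - i by ring]

/-- The block-recurrence shift preserves the measure. -/
lemma measurePreserving_etaShift (hQ : IsNestedIntervalQuantizer Q)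
    (ν : Measure (ℤ → ℝ)) [IsProbabilityMeasure ν]
    (hν : ∀ z : ℤ, MeasurePreserving (zshift z) ν ν) (k : ℕ) :
    MeasurePreserving (fun y => zshift ((recEta Q l coordP k 0 y : ℕ) : ℤ) y) ν ν := by
  classical
  set L := l k with hL
  set E : (ℤ → ℝ) → (ℤ → ℝ) → Prop :=
    fun x y => ∀ i : ℕ, i < L → Q k (x (-(i : ℤ))) = Q k (y (-(i : ℤ))) with hE_def
  -- enumerate the cells
  have hcnt : (Set.range (Q k)).Countable := hQ.2.2.2.1 k
  obtain ⟨e, he⟩ := hcnt.exists_eq_range ⟨Q k 0, 0, rfl⟩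
  have he_mem : ∀ n, ∃ w, Q k w = e n := by
    intro n
    have : e n ∈ Set.range (Q k) := he ▸ ⟨n, rfl⟩
    exact this
  -- the pattern classes
  set A : (Fin L → ℕ) → Set (ℤ → ℝ) :=
    fun m => {z | ∀ i : Fin L, z (-((i : ℕ) : ℤ)) ∈ e (m i)} with hA_def
  have hAmeas : ∀ m, MeasurableSet (A m) := by
    intro m
    have : A m = ⋂ i : Fin L, (fun z : ℤ → ℝ => z (-((i : ℕ) : ℤ))) ⁻¹' e (m i) := by
      ext z; simp only [hA_def, Set.mem_setOf_eq, Set.mem_iInter, Set.mem_preimage]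
    rw [this]
    refine MeasurableSet.iInter fun i => ?_
    obtain ⟨w, hw⟩ := he_mem (m i)
    have hmeas : MeasurableSet (e (m i)) := hw ▸ (hQ.2.1 k w).measurableSet
    exact hmeas.preimage (measurable_pi_apply _)
  have hAcover : ∀ x, ∃ m, x ∈ A m := by
    intro x
    have : ∀ i : Fin L, ∃ n, e n = Q k (x (-((i : ℕ) : ℤ))) := by
      intro i
      have : Q k (x (-((i : ℕ) : ℤ))) ∈ Set.range e := he ▸ ⟨_, rfl⟩
      exact this
    choose m hm using this
    exact ⟨m, fun i => (hm i) ▸ hQ.1 k _⟩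
  have hAclass : ∀ m x y, x ∈ A m → y ∈ A m → E x y := by
    intro m x y hx hy i hi
    obtain ⟨w, hw⟩ := he_mem (m ⟨i, hi⟩)
    have hxi := hx ⟨i, hi⟩
    have hyi := hy ⟨i, hi⟩
    rw [← hw] at hxi hyi
    exact (cell_eq_of_mem hQ hxi).trans (cell_eq_of_mem hQ hyi).symm
  have hEmeas : ∀ u : ℤ, MeasurableSet {y : ℤ → ℝ | E (zshift u y) y} := by
    intro u
    have : {y : ℤ → ℝ | E (zshift u y) y}
        = ⋂ (i : ℕ), ⋂ (_ : i < L), {y : ℤ → ℝ | Q k (y (-(i : ℤ) + u)) = Q k (y (-(i : ℤ)))} := by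
      ext y
      simp only [hE_def, Set.mem_setOf_eq, Set.mem_iInter, zshift_apply]
    rw [this]
    exact MeasurableSet.iInter fun i => MeasurableSet.iInter fun _ =>
      measurableSet_cellEq hQ k _ _
  have key := measurePreserving_returnTimeShift ν zshift hν zshift_add zshift_zero E
    (fun {x y} h i hi => (h i hi).symm)
    (fun {x y z} h1 h2 i hi => (h1 i hi).trans (h2 i hi))
    hEmeas A hAmeas hAcover hAclass
  have heq : (fun y : ℤ → ℝ =>
        zshift (sInf {t : ℕ | 0 < t ∧ E (zshift (t : ℤ) y) y} : ℕ) y)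
      = fun y => zshift ((recEta Q l coordP k 0 y : ℕ) : ℤ) y := by
    funext y
    have hs : {t : ℕ | 0 < t ∧ E (zshift (t : ℤ) y) y}
        = {t : ℕ | 0 < t ∧ ∀ i < l k,
            Q k (y ((0 : ℤ) + t - i)) = Q k (y ((0 : ℤ) - i))} := by
      ext t
      simp only [Set.mem_setOf_eq, hE_def, zshift_apply, hL]
      constructor
      · rintro ⟨ht, h⟩
        refine ⟨ht, fun i hi => ?_⟩
        have := h i hi
        rwa [show (-(i : ℤ) + t) = 0 + t - i by ring, show (-(i : ℤ)) = 0 - i by ring] at this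
      · rintro ⟨ht, h⟩
        refine ⟨ht, fun i hi => ?_⟩
        have := h i hi
        rwa [show (-(i : ℤ) + t) = 0 + t - i by ring, show (-(i : ℤ)) = 0 - i by ring]
    rw [hs]
    rfl
  rw [← heq]
  exact key

/-- The `ζ_j`-shift preserves the measure. -/
lemma measurePreserving_zetaShift (hQ : IsNestedIntervalQuantizer Q)
    (ν : Measure (ℤ → ℝ)) [IsProbabilityMeasure ν]
    (hν : ∀ z : ℤ, MeasurePreserving (zshift z) ν ν) (j : ℕ) :
    MeasurePreserving (fun y => zshift (recZeta Q l coordP j y) y) ν ν := by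
  induction j with
  | zero =>
    have : (fun y : ℤ → ℝ => zshift (recZeta Q l coordP 0 y) y) = id := by
      funext y; exact zshift_zero y
    rw [this]; exact MeasurePreserving.id ν
  | succ j ih =>
    have hcomp : (fun y : ℤ → ℝ => zshift (recZeta Q l coordP (j + 1) y) y)
        = (fun y => zshift ((recEta Q l coordP (j + 1) 0 y : ℕ) : ℤ) y)
          ∘ (fun y => zshift (recZeta Q l coordP j y) y) := by
      funext y
      rw [Function.comp_apply, recEta_zshift, zshift_add]
      show zshift (recZeta Q l coordP (j + 1) y) y = _
      have : recZeta Q l coordP (j + 1) y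
          = recZeta Q l coordP j y + recEta Q l coordP (j + 1) (recZeta Q l coordP j y) y := rfl
      rw [this, add_comm]
    rw [hcomp]
    exact (measurePreserving_etaShift hQ ν hν (j + 1)).comp ih

end IntermittentAux

namespace IntermittentAux

open MeasureTheory Filter Set

variable {Q : ℕ → ℝ → Set ℝ} {l : ℕ → ℕ}

lemma measurable_past : Measurable (fun y : ℤ → ℝ => fun n : ℕ => y (-(n : ℤ))) :=
  measurable_pi_lambda _ fun n => measurable_pi_apply _

lemma measurable_pastZeta (hQ : IsNestedIntervalQuantizer Q) (j : ℕ) :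
    Measurable (fun y : ℤ → ℝ => fun n : ℕ => y (recZeta Q l coordP j y - n)) := by
  refine measurable_pi_lambda _ fun n => ?_
  exact measurable_apply_countable (g := recZeta Q l coordP j)
    (F := fun b (y : ℤ → ℝ) => y (b - n))
    (fun b => measurable_recZeta hQ j (measurableSet_singleton b))
    (fun b => measurable_pi_apply _)

/-- The law of the past at time `ζ_j` equals the law of the past at time `0`. -/
lemma map_pastZeta (hQ : IsNestedIntervalQuantizer Q)
    (ν : Measure (ℤ → ℝ)) [IsProbabilityMeasure ν]
    (hν : ∀ z : ℤ, MeasurePreserving (zshift z) ν ν) (j : ℕ) :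
    Measure.map (fun y : ℤ → ℝ => fun n : ℕ => y (recZeta Q l coordP j y - n)) ν
      = Measure.map (fun y : ℤ → ℝ => fun n : ℕ => y (-(n : ℤ))) ν := by
  have hfac : (fun y : ℤ → ℝ => fun n : ℕ => y (recZeta Q l coordP j y - n))
      = (fun y : ℤ → ℝ => fun n : ℕ => y (-(n : ℤ)))
        ∘ (fun y => zshift (recZeta Q l coordP j y) y) := by
    funext y
    funext n
    show y (recZeta Q l coordP j y - n) = zshift (recZeta Q l coordP j y) y (-(n : ℤ))
    rw [zshift_apply]
    congr 1
    ring
  rw [hfac, ← Measure.map_map measurable_past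
      (measurePreserving_zetaShift hQ ν hν j).measurable,
    (measurePreserving_zetaShift hQ ν hν j).map_eq]

end IntermittentAux

open IntermittentAux in
/-- The limiting past `X̃_{-n} = lim_j X_{ζ_j − n}` has the same distribution as the
original one-sided past `(…, X_{-1}, X_0)` (coordinate `n` stands for index `-n`). -/
theorem intermittent_limit_past_same_distribution
    {Ω : Type*} [MeasurableSpace Ω] (μ : Measure Ω) [IsProbabilityMeasure μ]
    (X : ℤ → Ω → ℝ) (hXmeas : ∀ n, Measurable (X n)) (hstat : IsStationaryReal μ X)
    (Q : ℕ → ℝ → Set ℝ) (hQ : IsNestedIntervalQuantizer Q)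
    (l : ℕ → ℕ) (hl : GoodLengths l)
    (Xtilde : ℕ → Ω → ℝ) (hXtmeas : ∀ n, Measurable (Xtilde n))
    (hXtlim : ∀ᵐ ω ∂μ, ∀ n : ℕ,
      Filter.Tendsto (fun j => X (recZeta Q l X j ω - n) ω) Filter.atTop
        (nhds (Xtilde n ω))) :
    Measure.map (fun ω => fun n : ℕ => Xtilde n ω) μ
      = Measure.map (fun ω => fun n : ℕ => X (-(n : ℤ)) ω) μ := by
  have hstat' : Measure.map (fun ω (n : ℤ) => X (n + 1) ω) μ
      = Measure.map (fun ω (n : ℤ) => X n ω) μ := hstat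
  classical
  open MeasureTheory Filter Set ENNReal NNReal in
  set can : Ω → (ℤ → ℝ) := fun ω n => X n ω with hcan_def
  have hcan : Measurable can := measurable_pi_lambda _ fun n => hXmeas n
  set ν : Measure (ℤ → ℝ) := Measure.map can μ with hν_def
  have hνprob : IsProbabilityMeasure ν := Measure.isProbabilityMeasure_map hcan.aemeasurable
  have hshift1 : Measure.map (zshift 1) ν = ν := by
    rw [hν_def, Measure.map_map (measurable_zshift 1) hcan]
    have h1 : zshift 1 ∘ can = fun ω (n : ℤ) => X (n + 1) ω := rfl
    rw [h1, hstat']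
  have hν : ∀ z : ℤ, MeasureTheory.MeasurePreserving (zshift z) ν ν :=
    measurePreserving_zshift ν hshift1
  -- transfer recZeta to canonical space
  have hzeta : ∀ (j : ℕ) (ω : Ω), recZeta Q l X j ω = recZeta Q l coordP j (can ω) := by
    intro j
    induction j with
    | zero => intro ω; rfl
    | succ j ih =>
      intro ω
      show recZeta Q l X j ω + recEta Q l X (j + 1) (recZeta Q l X j ω) ω = _
      rw [ih ω]
      rfl
  -- the laws of the shifted pasts
  set past : (ℤ → ℝ) → (ℕ → ℝ) := fun y => fun n : ℕ => y (-(n : ℤ)) with hpast_def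
  have hRHS : (fun ω => fun n : ℕ => X (-(n : ℤ)) ω) = past ∘ can := rfl
  have hfac : ∀ j : ℕ, (fun ω => fun n : ℕ => X (recZeta Q l X j ω - n) ω)
      = (fun y : ℤ → ℝ => fun n : ℕ => y (recZeta Q l coordP j y - n)) ∘ can := by
    intro j
    funext ω
    funext n
    show X (recZeta Q l X j ω - n) ω = can ω (recZeta Q l coordP j (can ω) - n)
    rw [← hzeta j ω]
  have hlaw : ∀ j : ℕ, Measure.map (fun ω => fun n : ℕ => X (recZeta Q l X j ω - n) ω) μ
      = Measure.map (fun ω => fun n : ℕ => X (-(n : ℤ)) ω) μ := by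
    intro j
    rw [hfac j, hRHS, ← Measure.map_map (measurable_pastZeta hQ j) hcan,
      ← Measure.map_map measurable_past hcan]
    rw [show Measure.map can μ = ν from rfl, map_pastZeta hQ ν hν j]
  -- the limit step
  set g : ℕ → Ω → (ℕ → ℝ) := fun j ω => fun n : ℕ => X (recZeta Q l X j ω - n) ω with hg_def
  have hgmeas : ∀ j, Measurable (g j) := by
    intro j
    rw [hg_def]
    simp only
    rw [hfac j]
    exact (measurable_pastZeta hQ j).comp hcan
  set gl : Ω → (ℕ → ℝ) := fun ω => fun n : ℕ => Xtilde n ω with hgl_def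
  have hglmeas : Measurable gl := measurable_pi_lambda _ fun n => hXtmeas n
  have hglim : ∀ᵐ ω ∂μ, Tendsto (fun j => g j ω) atTop (nhds (gl ω)) := by
    filter_upwards [hXtlim] with ω h
    rw [tendsto_pi_nhds]
    exact fun n => h n
  haveI : IsProbabilityMeasure (Measure.map gl μ) :=
    Measure.isProbabilityMeasure_map hglmeas.aemeasurable
  refine ext_of_forall_lintegral_eq_of_IsFiniteMeasure (fun f => ?_)
  have hfmeas : Measurable fun x : ℕ → ℝ => (f x : ℝ≥0∞) :=
    f.continuous.measurable.coe_nnreal_ennreal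
  rw [hRHS, lintegral_map hfmeas hglmeas, lintegral_map hfmeas (measurable_past.comp hcan)]
  have hconst : ∀ j : ℕ, ∫⁻ ω, (f (g j ω) : ℝ≥0∞) ∂μ
      = ∫⁻ ω, (f ((past ∘ can) ω) : ℝ≥0∞) ∂μ := by
    intro j
    rw [← lintegral_map hfmeas (hgmeas j), ← lintegral_map hfmeas (measurable_past.comp hcan)]
    rw [show Measure.map (g j) μ
        = Measure.map (fun ω => fun n : ℕ => X (recZeta Q l X j ω - n) ω) μ from rfl,
      hlaw j, hRHS]
  obtain ⟨C, hC⟩ := f.bounded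
  have hbd : ∀ x : ℕ → ℝ, (f x : ℝ≥0∞) ≤ ENNReal.ofReal (C + (f (fun _ => 0) : ℝ)) := by
    intro x
    have h1 : dist (f x) (f (fun _ => 0)) ≤ C := hC x _
    rw [NNReal.dist_eq] at h1
    have h2 : (f x : ℝ) ≤ C + (f (fun _ => 0) : ℝ) := by
      have := abs_le.mp (le_trans (le_refl _) h1)
      cases this with
      | intro hl hr => linarith
    calc (f x : ℝ≥0∞) = ENNReal.ofReal ((f x : ℝ≥0) : ℝ) := (ENNReal.ofReal_coe_nnreal).symm
      _ ≤ _ := ENNReal.ofReal_le_ofReal h2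
  have hdct := tendsto_lintegral_of_dominated_convergence (μ := μ)
    (F := fun j ω => (f (g j ω) : ℝ≥0∞)) (f := fun ω => (f (gl ω) : ℝ≥0∞))
    (fun _ => ENNReal.ofReal (C + (f (fun _ => 0) : ℝ)))
    (fun j => hfmeas.comp (hgmeas j))
    (fun j => Filter.Eventually.of_forall fun ω => hbd _)
    (by rw [lintegral_const]
        exact ENNReal.mul_ne_top ENNReal.ofReal_ne_top (measure_ne_top μ _))
    (by filter_upwards [hglim] with ω h
        exact (ENNReal.continuous_coe.tendsto _).comp ((f.continuous.tendsto _).comp h))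
  simp_rw [hconst] at hdct
  exact tendsto_nhds_unique hdct tendsto_const_nhds
end

section
/- Let {X_n} be a stationary real-valued time series, and suppose the partitions P_k used for quantization are finite. If for some ε > 0 the series Σ_{k≥1} (k+1) 2^{-l_k ε} converges, then the stopping times satisfy ζ_k < |P_k|^{l_k} · 2^{l_k ε} eventually almost surely, where |P_k| is the number of cells of P_k. -/
open MeasureTheory Filter Set

namespace IntermittentAux

open scoped ENNReal NNReal

noncomputable section




def Yc : ℤ → (ℤ → ℝ) → ℝ := fun n x => x n

def shiftc (c : ℤ) (x : ℤ → ℝ) : ℤ → ℝ := fun n => x (n + c)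

variable (Q : ℕ → ℝ → Set ℝ) (l : ℕ → ℕ)

/-- recurrence condition at level `j`, position `b`, gap `t`. -/
def RC (j : ℕ) (b : ℤ) (t : ℕ) : Set (ℤ → ℝ) :=
  {x | ∀ i < l j, Q j (x (b + t - i)) = Q j (x (b - i))}

def eta (j : ℕ) (b : ℤ) (x : ℤ → ℝ) : ℕ := sInf {t | 0 < t ∧ x ∈ RC Q l j b t}

def zeta' : ℕ → (ℤ → ℝ) → ℕ
  | 0, _ => 0
  | k + 1, x => zeta' k x + eta Q l (k + 1) (zeta' k x) x

def Om : Set (ℤ → ℝ) := {x | ∀ (j : ℕ) (b : ℤ), ∃ t : ℕ, 0 < t ∧ x ∈ RC Q l j b t}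

lemma eta_eq_recEta (j : ℕ) (b : ℤ) (x : ℤ → ℝ) : eta Q l j b x = recEta Q l Yc j b x := rfl

lemma recZeta_eq (k : ℕ) (x : ℤ → ℝ) : recZeta Q l Yc k x = (zeta' Q l k x : ℤ) := by
  induction k with
  | zero => rfl
  | succ k ih =>
    show recZeta Q l Yc k x + (recEta Q l Yc (k+1) (recZeta Q l Yc k x) x : ℤ) = _
    rw [ih]
    show _ = ((zeta' Q l k x + eta Q l (k+1) (zeta' Q l k x) x : ℕ) : ℤ)
    rw [← eta_eq_recEta]
    push_cast
    ring

/-- shift algebra -/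
lemma shiftc_shiftc (c d : ℤ) (x : ℤ → ℝ) : shiftc c (shiftc d x) = shiftc (c + d) x := by
  funext n; simp [shiftc, add_assoc]

lemma shiftc_zero (x : ℤ → ℝ) : shiftc 0 x = x := by funext n; simp [shiftc]

lemma mem_RC_shiftc (j : ℕ) (b s : ℤ) (t : ℕ) (x : ℤ → ℝ) :
    shiftc s x ∈ RC Q l j b t ↔ x ∈ RC Q l j (b + s) t := by
  simp only [RC, shiftc, mem_setOf_eq]
  constructor <;> intro h i hi <;> have := h i hi
  · have e1 : b + s + (t:ℤ) - i = b + t - i + s := by ring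
    have e2 : b + s - (i:ℤ) = b - i + s := by ring
    rw [e1, e2]; exact this
  · have e1 : b + (t:ℤ) - i + s = b + s + t - i := by ring
    have e2 : b - (i:ℤ) + s = b + s - i := by ring
    rw [e1, e2]; exact this

lemma eta_shiftc (j : ℕ) (b s : ℤ) (x : ℤ → ℝ) :
    eta Q l j b (shiftc s x) = eta Q l j (b + s) x := by
  unfold eta
  congr 1
  ext t
  simp [mem_RC_shiftc]

lemma Om_shiftc (s : ℤ) (x : ℤ → ℝ) : shiftc s x ∈ Om Q l ↔ x ∈ Om Q l := by
  constructor <;> intro h j b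
  · obtain ⟨t, ht, hrc⟩ := h j (b - s)
    exact ⟨t, ht, by have := (mem_RC_shiftc Q l j (b - s) s t x).mp hrc; simpa using this⟩
  · obtain ⟨t, ht, hrc⟩ := h j (b + s)
    exact ⟨t, ht, (mem_RC_shiftc Q l j b s t x).mpr hrc⟩

/-- absolute chain -/
def achain (j : ℕ) (s : ℤ) (x : ℤ → ℝ) : ℤ := s + (zeta' Q l j (shiftc s x) : ℤ)

lemma achain_zero (s : ℤ) (x : ℤ → ℝ) : achain Q l 0 s x = s := by simp [achain, zeta']

lemma achain_succ (j : ℕ) (s : ℤ) (x : ℤ → ℝ) :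
    achain Q l (j+1) s x = achain Q l j s x + eta Q l (j+1) (achain Q l j s x) x := by
  unfold achain
  show s + ((zeta' Q l j (shiftc s x) + eta Q l (j+1) (zeta' Q l j (shiftc s x)) (shiftc s x) : ℕ) : ℤ) = _
  rw [eta_shiftc]
  push_cast
  ring


variable {Q : ℕ → ℝ → Set ℝ} {l : ℕ → ℕ}


lemma cell_eq (hmem : ∀ k x, x ∈ Q k x)
    (hdisj : ∀ k x y, Q k x = Q k y ∨ Disjoint (Q k x) (Q k y))
    {k : ℕ} {y z : ℝ} (h : y ∈ Q k z) : Q k y = Q k z := by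
  rcases hdisj k y z with h' | h'
  · exact h'
  · exact absurd rfl (h'.ne_of_mem (hmem k y) h)

lemma cell_eq_iff (hmem : ∀ k x, x ∈ Q k x)
    (hdisj : ∀ k x y, Q k x = Q k y ∨ Disjoint (Q k x) (Q k y))
    {k : ℕ} (u v : ℝ) :
    Q k u = Q k v ↔ ∃ c ∈ Set.range (Q k), u ∈ c ∧ v ∈ c := by
  constructor
  · intro h; exact ⟨Q k u, ⟨u, rfl⟩, hmem k u, h ▸ hmem k v⟩
  · rintro ⟨c, ⟨z, rfl⟩, hu, hv⟩
    rw [cell_eq hmem hdisj hu, cell_eq hmem hdisj hv]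

lemma cell_measurable (hconn : ∀ k x, (Q k x).OrdConnected)
    {k : ℕ} {c : Set ℝ} (hc : c ∈ Set.range (Q k)) : MeasurableSet c := by
  obtain ⟨z, rfl⟩ := hc; exact (hconn k z).measurableSet

lemma measurable_eqcells (hmem : ∀ k x, x ∈ Q k x)
    (hconn : ∀ k x, (Q k x).OrdConnected)
    (hdisj : ∀ k x y, Q k x = Q k y ∨ Disjoint (Q k x) (Q k y))
    (hQfin : ∀ k, (Set.range (Q k)).Finite)
    (k : ℕ) (n m : ℤ) :
    MeasurableSet {x : ℤ → ℝ | Q k (x n) = Q k (x m)} := by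
  have h : {x : ℤ → ℝ | Q k (x n) = Q k (x m)} =
      ⋃ c ∈ Set.range (Q k), ((fun x : ℤ → ℝ => x n) ⁻¹' c ∩ (fun x : ℤ → ℝ => x m) ⁻¹' c) := by
    ext x
    simp only [mem_setOf_eq, mem_iUnion, mem_inter_iff, mem_preimage, exists_prop]
    exact cell_eq_iff hmem hdisj _ _
  rw [h]
  exact MeasurableSet.biUnion (hQfin k).countable (fun c hc =>
    ((measurable_pi_apply n) (cell_measurable hconn hc)).inter
      ((measurable_pi_apply m) (cell_measurable hconn hc)))

lemma measurable_RC (hmem : ∀ k x, x ∈ Q k x)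
    (hconn : ∀ k x, (Q k x).OrdConnected)
    (hdisj : ∀ k x y, Q k x = Q k y ∨ Disjoint (Q k x) (Q k y))
    (hQfin : ∀ k, (Set.range (Q k)).Finite)
    (j : ℕ) (b : ℤ) (t : ℕ) : MeasurableSet (RC Q l j b t) := by
  have h : RC Q l j b t =
      ⋂ i ∈ Finset.range (l j), {x : ℤ → ℝ | Q j (x (b + t - i)) = Q j (x (b - i))} := by
    ext x; simp [RC, mem_setOf_eq]
  rw [h]
  exact MeasurableSet.biInter (Finset.range (l j)).countable_toSet
    (fun i _ => measurable_eqcells hmem hconn hdisj hQfin j _ _)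

lemma measurable_sInf {α : Type*} [MeasurableSpace α] (T : α → Set ℕ)
    (hT : ∀ t, MeasurableSet {x | t ∈ T x}) : Measurable (fun x => sInf (T x)) := by
  apply measurable_to_countable'
  intro n
  have h : (fun x => sInf (T x)) ⁻¹' {n} =
      (({x | n ∈ T x} ∩ ⋂ m ∈ Finset.range n, {x | m ∈ T x}ᶜ) ∪
        (if n = 0 then ⋂ m : ℕ, {x | m ∈ T x}ᶜ else ∅)) := by
    ext x
    simp only [mem_preimage, mem_singleton_iff, mem_union, mem_inter_iff, mem_setOf_eq,
      mem_iInter, Finset.mem_range, mem_compl_iff]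
    constructor
    · intro h
      rcases eq_empty_or_nonempty (T x) with he | hne
      · right
        rw [he, Nat.sInf_empty] at h
        rw [if_pos h.symm]
        simp only [mem_iInter, mem_compl_iff, mem_setOf_eq]
        intro m hm
        rw [he] at hm
        exact hm
      · left
        exact ⟨h ▸ Nat.sInf_mem hne, fun m hm => Nat.notMem_of_lt_sInf (h ▸ hm)⟩
    · rintro (⟨hn, hlt⟩ | hb)
      · refine le_antisymm (Nat.sInf_le hn) ?_
        by_contra hc
        push_neg at hc
        exact hlt _ hc (Nat.sInf_mem ⟨n, hn⟩)
      · rcases Nat.eq_zero_or_pos n with rfl | hpos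
        · rw [if_pos rfl] at hb
          simp only [mem_iInter, mem_compl_iff, mem_setOf_eq] at hb
          have : T x = ∅ := eq_empty_iff_forall_notMem.mpr hb
          simp [this, Nat.sInf_empty]
        · rw [if_neg (Nat.pos_iff_ne_zero.mp hpos)] at hb
          exact absurd hb (notMem_empty x)
  rw [h]
  refine MeasurableSet.union ((hT n).inter (MeasurableSet.biInter (Finset.range n).countable_toSet
    (fun m _ => (hT m).compl))) ?_
  split
  · exact MeasurableSet.iInter (fun m => (hT m).compl)
  · exact MeasurableSet.empty


-- ### eta / zeta' measurability

lemma measurable_eta (hmem : ∀ k x, x ∈ Q k x)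
    (hconn : ∀ k x, (Q k x).OrdConnected)
    (hdisj : ∀ k x y, Q k x = Q k y ∨ Disjoint (Q k x) (Q k y))
    (hQfin : ∀ k, (Set.range (Q k)).Finite)
    (j : ℕ) (b : ℤ) : Measurable (eta Q l j b) := by
  apply measurable_sInf
  intro t
  have h : {x : ℤ → ℝ | t ∈ {t | 0 < t ∧ x ∈ RC Q l j b t}} =
      if 0 < t then RC Q l j b t else ∅ := by
    ext x; split <;> simp_all [mem_setOf_eq]
  rw [h]
  split
  · exact measurable_RC hmem hconn hdisj hQfin j b t
  · exact MeasurableSet.empty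

lemma measurable_comp_nat {α : Type*} [MeasurableSpace α] {f : α → ℕ} (hf : Measurable f)
    {g : ℕ → α → ℕ} (hg : ∀ b, Measurable (g b)) : Measurable (fun x => g (f x) x) := by
  apply measurable_to_countable'
  intro n
  have h : (fun x => g (f x) x) ⁻¹' {n} = ⋃ b : ℕ, (f ⁻¹' {b} ∩ (g b) ⁻¹' {n}) := by
    ext x
    simp only [mem_preimage, mem_singleton_iff, mem_iUnion, mem_inter_iff]
    exact ⟨fun h => ⟨f x, rfl, h⟩, by rintro ⟨b, rfl, h⟩; exact h⟩
  rw [h]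
  exact MeasurableSet.iUnion (fun b =>
    (hf (measurableSet_singleton b)).inter (hg b (measurableSet_singleton n)))

lemma measurable_zeta' (hmem : ∀ k x, x ∈ Q k x)
    (hconn : ∀ k x, (Q k x).OrdConnected)
    (hdisj : ∀ k x y, Q k x = Q k y ∨ Disjoint (Q k x) (Q k y))
    (hQfin : ∀ k, (Set.range (Q k)).Finite) :
    ∀ k, Measurable (zeta' Q l k)
  | 0 => measurable_const
  | k+1 => by
    have ih := measurable_zeta' hmem hconn hdisj hQfin k
    exact ih.add (measurable_comp_nat ih
      (fun b => measurable_eta hmem hconn hdisj hQfin (k+1) (b : ℤ)))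

lemma measurable_Z (hmem : ∀ k x, x ∈ Q k x)
    (hconn : ∀ k x, (Q k x).OrdConnected)
    (hdisj : ∀ k x y, Q k x = Q k y ∨ Disjoint (Q k x) (Q k y))
    (hQfin : ∀ k, (Set.range (Q k)).Finite) (j : ℕ) (b : ℤ) :
    MeasurableSet {x : ℤ → ℝ | ∀ t : ℕ, ¬(0 < t ∧ x ∈ RC Q l j b t)} := by
  have h : {x : ℤ → ℝ | ∀ t : ℕ, ¬(0 < t ∧ x ∈ RC Q l j b t)} =
      ⋂ t : ℕ, ({x : ℤ → ℝ | 0 < t ∧ x ∈ RC Q l j b t})ᶜ := by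
    ext x; simp [mem_setOf_eq]
  rw [h]
  refine MeasurableSet.iInter (fun t => MeasurableSet.compl ?_)
  have h2 : {x : ℤ → ℝ | 0 < t ∧ x ∈ RC Q l j b t} = if 0 < t then RC Q l j b t else ∅ := by
    ext x; split <;> simp_all [mem_setOf_eq]
  rw [h2]; split
  · exact measurable_RC hmem hconn hdisj hQfin j b t
  · exact MeasurableSet.empty

lemma measurable_Om (hmem : ∀ k x, x ∈ Q k x)
    (hconn : ∀ k x, (Q k x).OrdConnected)
    (hdisj : ∀ k x y, Q k x = Q k y ∨ Disjoint (Q k x) (Q k y))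
    (hQfin : ∀ k, (Set.range (Q k)).Finite) :
    MeasurableSet (Om Q l) := by
  have h : Om Q l = ⋂ (j : ℕ), ⋂ (b : ℤ),
      ({x : ℤ → ℝ | ∀ t : ℕ, ¬(0 < t ∧ x ∈ RC Q l j b t)})ᶜ := by
    ext x
    simp only [Om, mem_setOf_eq, mem_iInter, mem_compl_iff]
    push_neg
    constructor
    · intro h j b; obtain ⟨t, ht⟩ := h j b; exact ⟨t, ht⟩
    · intro h j b; obtain ⟨t, ht⟩ := h j b; exact ⟨t, ht⟩
  rw [h]
  exact MeasurableSet.iInter fun j => MeasurableSet.iInter fun b =>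
    (measurable_Z hmem hconn hdisj hQfin j b).compl

-- ### shifts are measure preserving

lemma measurable_shiftc (c : ℤ) : Measurable (shiftc c) :=
  measurable_pi_lambda _ (fun n => measurable_pi_apply (n + c))

section mp
variable {ν : Measure (ℤ → ℝ)} (hν : Measure.map (shiftc 1) ν = ν)

include hν in
lemma mp_shiftc_nat (n : ℕ) : MeasurePreserving (shiftc (n : ℤ)) ν ν := by
  induction n with
  | zero =>
    have h : shiftc ((0:ℕ) : ℤ) = id := funext shiftc_zero
    rw [h]; exact MeasurePreserving.id ν
  | succ n ih =>
    have h1 : MeasurePreserving (shiftc 1) ν ν := ⟨measurable_shiftc 1, hν⟩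
    have h : shiftc ((n+1 : ℕ) : ℤ) = shiftc 1 ∘ shiftc (n : ℤ) := by
      funext x; rw [Function.comp_apply, shiftc_shiftc]
      congr 1; push_cast; ring
    rw [h]
    exact h1.comp ih

include hν in
lemma mp_shiftc (c : ℤ) : MeasurePreserving (shiftc c) ν ν := by
  rcases Int.eq_nat_or_neg c with ⟨n, rfl | rfl⟩
  · exact mp_shiftc_nat hν n
  · refine ⟨measurable_shiftc _, ?_⟩
    conv_lhs => rw [← (mp_shiftc_nat hν n).map_eq]
    rw [Measure.map_map (measurable_shiftc _) (measurable_shiftc _)]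
    have h : shiftc (-(n:ℤ)) ∘ shiftc (n : ℤ) = id := by
      funext x; rw [Function.comp_apply, shiftc_shiftc]; simp [shiftc_zero]
    rw [h, Measure.map_id]

include hν in
lemma iterate_shiftc (n : ℕ) : (shiftc 1)^[n] = shiftc (n : ℤ) := by
  induction n with
  | zero => exact funext fun x => (shiftc_zero x).symm ▸ rfl
  | succ n ih =>
    funext x
    rw [Function.iterate_succ_apply', ih, shiftc_shiftc]
    norm_num [add_comm]
end mp

-- ### patterns

def Apat (Q : ℕ → ℝ → Set ℝ) (l : ℕ → ℕ) (j : ℕ) (p : Fin (l j) → Set ℝ) : Set (ℤ → ℝ) :=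
  {x | ∀ i : Fin (l j), Q j (x (0 - ((i : ℕ) : ℤ))) = p i}

def patOf (Q : ℕ → ℝ → Set ℝ) (l : ℕ → ℕ) (j : ℕ) (x : ℤ → ℝ) : Fin (l j) → Set ℝ :=
  fun i => Q j (x (0 - ((i : ℕ) : ℤ)))

lemma mem_Apat_patOf (j : ℕ) (x : ℤ → ℝ) : x ∈ Apat Q l j (patOf Q l j x) := fun _ => rfl

lemma measurable_Apat (hmem : ∀ k x, x ∈ Q k x)
    (hconn : ∀ k x, (Q k x).OrdConnected)
    (hdisj : ∀ k x y, Q k x = Q k y ∨ Disjoint (Q k x) (Q k y))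
    (j : ℕ) {p : Fin (l j) → Set ℝ} (hp : ∀ i, p i ∈ Set.range (Q j)) :
    MeasurableSet (Apat Q l j p) := by
  have h : Apat Q l j p = ⋂ i : Fin (l j),
      (fun x : ℤ → ℝ => x (0 - ((i : ℕ) : ℤ))) ⁻¹' {y : ℝ | Q j y = p i} := by
    ext x; simp [Apat, mem_setOf_eq]
  rw [h]
  refine MeasurableSet.iInter (fun i => (measurable_pi_apply _) ?_)
  obtain ⟨z, hz⟩ := hp i
  have h2 : {y : ℝ | Q j y = p i} = p i := by
    ext y
    simp only [mem_setOf_eq]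
    constructor
    · intro h'; rw [← h']; exact hmem j y
    · intro h'; rw [← hz] at h' ⊢; exact cell_eq hmem hdisj h'
  rw [h2, ← hz]
  exact (hconn j z).measurableSet

lemma pat_return_iff (j : ℕ) {p : Fin (l j) → Set ℝ} {x : ℤ → ℝ}
    (hx : x ∈ Apat Q l j p) (s : ℕ) :
    shiftc (s : ℤ) x ∈ Apat Q l j p ↔ x ∈ RC Q l j 0 s := by
  simp only [Apat, RC, shiftc, mem_setOf_eq] at *
  constructor
  · intro h i hi
    have h1 := h ⟨i, hi⟩
    have h2 := hx ⟨i, hi⟩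
    simp only at h1 h2
    rw [show (0:ℤ) + (s:ℤ) - (i:ℕ) = 0 - (i:ℕ) + s by ring]
    exact h1.trans h2.symm
  · intro h i
    have h1 := h (i : ℕ) i.2
    have h2 := hx i
    rw [show (0:ℤ) - ((i:ℕ):ℤ) + s = 0 + (s:ℤ) - (i:ℕ) by ring]
    exact h1.trans h2

-- ### eta basic facts on Om

lemma eta_spec {x : ℤ → ℝ} (hx : x ∈ Om Q l) (j : ℕ) (b : ℤ) :
    0 < eta Q l j b x ∧ x ∈ RC Q l j b (eta Q l j b x) := by
  have hne : {t : ℕ | 0 < t ∧ x ∈ RC Q l j b t}.Nonempty := by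
    obtain ⟨t, ht⟩ := hx j b; exact ⟨t, ht⟩
  exact Nat.sInf_mem hne

-- ### chain uniqueness

lemma no_crossing {x : ℤ → ℝ} (hx : x ∈ Om Q l) (m : ℕ) {p p' : ℤ} (hlt : p < p') :
    p + (eta Q l m p x : ℤ) ≠ p' + (eta Q l m p' x : ℤ) := by
  intro heq
  have he := eta_spec hx m p
  have he' := eta_spec hx m p'
  set e := eta Q l m p x with hedef
  set e' := eta Q l m p' x with he'def
  set t0 : ℕ := (p' - p).toNat with ht0def
  have ht0 : (t0 : ℤ) = p' - p := Int.toNat_of_nonneg (by omega)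
  have ht0pos : 0 < t0 := by omega
  have hrc : x ∈ RC Q l m p t0 := by
    intro i hi
    have h1 := he.2 i hi
    have h2 := he'.2 i hi
    rw [show p + (t0:ℤ) - i = p' - i by omega]
    rw [← h2, show p' + (e':ℤ) - i = p + (e:ℤ) - i by omega, h1]
  have hle : e ≤ t0 := Nat.sInf_le ⟨ht0pos, hrc⟩
  have := he'.1
  omega

lemma achain_inj {x : ℤ → ℝ} (hx : x ∈ Om Q l) :
    ∀ (j : ℕ) {s s' : ℤ}, achain Q l j s x = achain Q l j s' x → s = s'
  | 0, s, s', h => by rwa [achain_zero, achain_zero] at h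
  | j+1, s, s', h => by
    rw [achain_succ, achain_succ] at h
    have hpp : achain Q l j s x = achain Q l j s' x := by
      rcases lt_trichotomy (achain Q l j s x) (achain Q l j s' x) with hl | hl | hl
      · exact absurd h (no_crossing hx (j+1) hl)
      · exact hl
      · exact absurd h.symm (no_crossing hx (j+1) hl)
    exact achain_inj hx j hpp

-- ### Poincaré: Om is conull

section poincare
variable {ν : Measure (ℤ → ℝ)} [IsProbabilityMeasure ν]

lemma om_compl_null (hν : Measure.map (shiftc 1) ν = ν)
    (hmem : ∀ k x, x ∈ Q k x)
    (hconn : ∀ k x, (Q k x).OrdConnected)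
    (hdisj : ∀ k x y, Q k x = Q k y ∨ Disjoint (Q k x) (Q k y))
    (hQfin : ∀ k, (Set.range (Q k)).Finite) :
    ν (Om Q l)ᶜ = 0 := by
  classical
  set Z : ℕ → ℤ → Set (ℤ → ℝ) :=
    fun j b => {x | ∀ t : ℕ, ¬(0 < t ∧ x ∈ RC Q l j b t)} with hZdef
  have hsub : (Om Q l)ᶜ ⊆ ⋃ jb : ℕ × ℤ, Z jb.1 jb.2 := by
    intro x hx
    simp only [Om, mem_compl_iff, mem_setOf_eq] at hx
    push_neg at hx
    obtain ⟨j, b, hjb⟩ := hx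
    exact mem_iUnion.mpr ⟨⟨j, b⟩, fun t ht => (hjb t ht.1) ht.2⟩
  refine measure_mono_null hsub (measure_iUnion_null ?_)
  rintro ⟨j, b⟩
  -- reduce to b = 0
  have hpre : Z j b = shiftc b ⁻¹' (Z j 0) := by
    ext x
    simp only [hZdef, mem_preimage, mem_setOf_eq]
    constructor
    · intro h t ht
      refine h t ⟨ht.1, ?_⟩
      have := (mem_RC_shiftc Q l j 0 b t x).mp ht.2
      rwa [zero_add] at this
    · intro h t ht
      refine h t ⟨ht.1, ?_⟩
      rw [mem_RC_shiftc, zero_add]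
      exact ht.2
  have hz0 : MeasurableSet (Z j 0) := measurable_Z hmem hconn hdisj hQfin j 0
  rw [hpre, (mp_shiftc hν b).measure_preimage hz0.nullMeasurableSet]
  -- Poincaré at the origin, via patterns
  set C : Finset (Set ℝ) := (hQfin j).toFinset with hCdef
  set P : Finset (Fin (l j) → Set ℝ) := Fintype.piFinset (fun _ => C) with hPdef
  have hsub2 : Z j 0 ⊆ ⋃ p ∈ (P : Finset (Fin (l j) → Set ℝ)),
      (Apat Q l j p ∩ {x | ∀ n : ℕ, 1 ≤ n → shiftc (n : ℤ) x ∉ Apat Q l j p}) := by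
    intro x hx
    have hmemP : patOf Q l j x ∈ P := by
      rw [hPdef, Fintype.mem_piFinset]
      intro i
      rw [hCdef, Set.Finite.mem_toFinset]
      exact ⟨x (0 - ((i:ℕ):ℤ)), rfl⟩
    refine mem_biUnion hmemP ⟨mem_Apat_patOf j x, fun n hn hcon => ?_⟩
    have := (pat_return_iff j (mem_Apat_patOf j x) n).mp hcon
    exact (hx n) ⟨by omega, this⟩
  refine measure_mono_null hsub2 ((measure_biUnion_null_iff P.countable_toSet).mpr ?_)
  intro p hp
  have hpr : ∀ i, p i ∈ Set.range (Q j) := by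
    intro i
    have := (Fintype.mem_piFinset.mp (by rwa [hPdef] at hp)) i
    rwa [hCdef, Set.Finite.mem_toFinset] at this
  have hA : MeasurableSet (Apat Q l j p) := measurable_Apat hmem hconn hdisj j hpr
  have hcons : MeasureTheory.Conservative (shiftc 1) ν :=
    (⟨measurable_shiftc 1, hν⟩ : MeasurePreserving (shiftc 1) ν ν).conservative
  have hae := hcons.ae_mem_imp_frequently_image_mem hA.nullMeasurableSet
  rw [MeasureTheory.ae_iff] at hae
  refine measure_mono_null ?_ hae
  intro x hxmem
  simp only [mem_inter_iff, mem_setOf_eq] at hxmem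
  simp only [mem_setOf_eq]
  push_neg
  refine ⟨hxmem.1, Filter.not_frequently.mp (fun hfreq => ?_)⟩
  obtain ⟨n, hn1, hn2⟩ := (hfreq.and_eventually (eventually_ge_atTop 1)).exists
  rw [iterate_shiftc hν] at hn1
  exact hxmem.2 n hn2 hn1

end poincare

-- ### Kac-type bound

section kac
variable {ν : Measure (ℤ → ℝ)} [IsProbabilityMeasure ν]

lemma kac_bound (hν : Measure.map (shiftc 1) ν = ν)
    (hmem : ∀ k x, x ∈ Q k x)
    (hconn : ∀ k x, (Q k x).OrdConnected)
    (hdisj : ∀ k x y, Q k x = Q k y ∨ Disjoint (Q k x) (Q k y))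
    (hQfin : ∀ k, (Set.range (Q k)).Finite)
    (j L : ℕ) :
    ∑ t ∈ Finset.range L, ν (Om Q l ∩ {x | t + 1 ≤ eta Q l j 0 x}) ≤
      (((Set.range (Q j)).ncard ^ (l j) : ℕ) : ℝ≥0∞) := by
  classical
  set C : Finset (Set ℝ) := (hQfin j).toFinset with hCdef
  set P : Finset (Fin (l j) → Set ℝ) := Fintype.piFinset (fun _ => C) with hPdef
  have hpr : ∀ p ∈ P, ∀ i, p i ∈ Set.range (Q j) := by
    intro p hp i
    have := (Fintype.mem_piFinset.mp (by rwa [hPdef] at hp)) i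
    rwa [hCdef, Set.Finite.mem_toFinset] at this
  have hAmeas : ∀ p ∈ P, MeasurableSet (Apat Q l j p) :=
    fun p hp => measurable_Apat hmem hconn hdisj j (hpr p hp)
  set W : ℕ → Set (ℤ → ℝ) := fun t => Om Q l ∩ {x | t + 1 ≤ eta Q l j 0 x} with hWdef
  have hWmeas : ∀ t, MeasurableSet (W t) := by
    intro t
    refine (measurable_Om hmem hconn hdisj hQfin).inter ?_
    exact measurable_eta hmem hconn hdisj hQfin j 0 measurableSet_Ici
  -- partition by patterns
  have hpart : ∀ t, ν (W t) = ∑ p ∈ P, ν (Apat Q l j p ∩ W t) := by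
    intro t
    have hcover : W t = ⋃ p ∈ (P : Finset (Fin (l j) → Set ℝ)), (Apat Q l j p ∩ W t) := by
      ext x
      constructor
      · intro hx
        have hmemP : patOf Q l j x ∈ P := by
          rw [hPdef, Fintype.mem_piFinset]
          intro i
          rw [hCdef, Set.Finite.mem_toFinset]
          exact ⟨x (0 - ((i:ℕ):ℤ)), rfl⟩
        exact Set.mem_biUnion hmemP ⟨mem_Apat_patOf j x, hx⟩
      · intro hx
        obtain ⟨p, -, -, hx⟩ := Set.mem_iUnion₂.mp hx
        exact hx
    have := measure_biUnion_finset (μ := ν) (s := P)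
      (f := fun p => Apat Q l j p ∩ W t) ?_ (fun p hp => (hAmeas p hp).inter (hWmeas t))
    · rw [← this, ← hcover]
    · intro p hp q hq hpq
      refine Set.disjoint_left.mpr ?_
      rintro x ⟨hx1, -⟩ ⟨hx2, -⟩
      exact hpq (funext fun i => (hx1 i).symm.trans (hx2 i))
  -- per pattern telescoping
  have hper : ∀ p ∈ P, ∑ t ∈ Finset.range L, ν (Apat Q l j p ∩ W t) ≤ 1 := by
    intro p hp
    set A := Apat Q l j p with hAdef
    have hA : MeasurableSet A := hAmeas p hp
    set E : ℕ → Set (ℤ → ℝ) :=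
      fun t => ⋂ s ∈ Finset.range t, (shiftc (s:ℤ)) ⁻¹' Aᶜ with hEdef
    set B : ℕ → Set (ℤ → ℝ) :=
      fun t => A ∩ ⋂ s ∈ Finset.Icc 1 t, (shiftc (s:ℤ)) ⁻¹' Aᶜ with hBdef
    have hEmeas : ∀ t, MeasurableSet (E t) := fun t =>
      MeasurableSet.biInter (Finset.range t).countable_toSet
        (fun s _ => measurable_shiftc (s:ℤ) hA.compl)
    have hWB : ∀ t, A ∩ W t ⊆ B t := by
      intro t x hx
      refine ⟨hx.1, ?_⟩
      simp only [mem_iInter, Finset.mem_Icc, mem_preimage, mem_compl_iff]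
      intro s hs hcon
      have hrc := (pat_return_iff j hx.1 s).mp hcon
      have hle : eta Q l j 0 x ≤ s := Nat.sInf_le ⟨by omega, hrc⟩
      have hxeta := hx.2.2
      simp only [mem_setOf_eq] at hxeta
      omega
    have htel : ∀ t, ν (E t) = ν (B t) + ν (E (t+1)) := by
      intro t
      have h1 : (shiftc (1:ℤ)) ⁻¹' (E t) = ⋂ s ∈ Finset.Icc 1 t, (shiftc (s:ℤ)) ⁻¹' Aᶜ := by
        ext x
        simp only [hEdef, mem_preimage, mem_iInter, Finset.mem_range, Finset.mem_Icc,
          mem_compl_iff]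
        constructor
        · intro h s hs
          have h' := h (s - 1) (by omega)
          rw [shiftc_shiftc] at h'
          rwa [show ((s - 1 : ℕ) : ℤ) + 1 = (s : ℤ) by omega] at h'
        · intro h s hs
          rw [shiftc_shiftc]
          have h' := h (s + 1) ⟨by omega, by omega⟩
          rwa [show ((s + 1 : ℕ) : ℤ) = (s : ℤ) + 1 by push_cast; ring] at h'
      have h2 : (⋂ s ∈ Finset.Icc 1 t, (shiftc (s:ℤ)) ⁻¹' Aᶜ) = B t ∪ E (t+1) := by
        have hE : E (t+1) = Aᶜ ∩ ⋂ s ∈ Finset.Icc 1 t, (shiftc (s:ℤ)) ⁻¹' Aᶜ := by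
          ext x
          simp only [hEdef, mem_iInter, Finset.mem_range, mem_inter_iff, Finset.mem_Icc,
            mem_preimage, mem_compl_iff]
          constructor
          · intro h
            refine ⟨?_, fun s hs => h s (by omega)⟩
            have h0 := h 0 (by omega)
            rwa [show ((0:ℕ):ℤ) = 0 from rfl, shiftc_zero] at h0
          · rintro ⟨h0, h⟩ s hs
            rcases Nat.eq_zero_or_pos s with rfl | hspos
            · rwa [show ((0:ℕ):ℤ) = 0 from rfl, shiftc_zero]
            · exact h s ⟨hspos, by omega⟩
        rw [hE, hBdef]
        ext x
        by_cases hxA : x ∈ A <;> simp [hxA]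
      have hdisjBE : Disjoint (B t) (E (t+1)) := by
        refine Set.disjoint_left.mpr ?_
        rintro x ⟨hxA, -⟩ hxE
        have h0 : x ∈ (shiftc ((0:ℕ):ℤ)) ⁻¹' Aᶜ := by
          refine Set.mem_iInter₂.mp hxE 0 ?_
          simp
        rw [show ((0:ℕ):ℤ) = 0 from rfl] at h0
        rw [mem_preimage, shiftc_zero] at h0
        exact h0 hxA
      rw [← (mp_shiftc hν 1).measure_preimage (hEmeas t).nullMeasurableSet, h1, h2]
      exact measure_union hdisjBE (hEmeas (t+1))
    have hsum : ∀ M : ℕ, ∑ t ∈ Finset.range M, ν (B t) + ν (E M) = 1 := by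
      intro M
      induction M with
      | zero =>
        simp only [Finset.range_zero, Finset.sum_empty, zero_add]
        have : E 0 = Set.univ := by
          simp [hEdef]
        rw [this, measure_univ]
      | succ M ih =>
        rw [Finset.sum_range_succ, add_assoc, ← htel M, ih]
    calc ∑ t ∈ Finset.range L, ν (A ∩ W t)
        ≤ ∑ t ∈ Finset.range L, ν (B t) :=
          Finset.sum_le_sum (fun t _ => measure_mono (hWB t))
      _ ≤ 1 := le_of_le_of_eq (le_add_right le_rfl) (hsum L)
  calc ∑ t ∈ Finset.range L, ν (W t)
      = ∑ t ∈ Finset.range L, ∑ p ∈ P, ν (Apat Q l j p ∩ W t) :=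
        Finset.sum_congr rfl (fun t _ => hpart t)
    _ = ∑ p ∈ P, ∑ t ∈ Finset.range L, ν (Apat Q l j p ∩ W t) := Finset.sum_comm
    _ ≤ ∑ p ∈ P, 1 := Finset.sum_le_sum hper
    _ = (P.card : ℝ≥0∞) := by simp
    _ = (((Set.range (Q j)).ncard ^ (l j) : ℕ) : ℝ≥0∞) := by
        rw [hPdef, Fintype.card_piFinset]
        simp only [Finset.prod_const, Finset.card_univ, Fintype.card_fin]
        congr 2
        rw [hCdef, ← Set.ncard_eq_toFinset_card (Set.range (Q j)) (hQfin j)]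

end kac

-- ### counting at the stopping position via chain uniqueness

section counting
variable {ν : Measure (ℤ → ℝ)} [IsProbabilityMeasure ν]

lemma eta_at_zeta_bound (hν : Measure.map (shiftc 1) ν = ν)
    (hmem : ∀ k x, x ∈ Q k x)
    (hconn : ∀ k x, (Q k x).OrdConnected)
    (hdisj : ∀ k x y, Q k x = Q k y ∨ Disjoint (Q k x) (Q k y))
    (hQfin : ∀ k, (Set.range (Q k)).Finite)
    (j t : ℕ) :
    ν (Om Q l ∩ {x | t + 1 ≤ eta Q l (j+1) (zeta' Q l j x : ℤ) x}) ≤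
      ν (Om Q l ∩ {x | t + 1 ≤ eta Q l (j+1) 0 x}) := by
  have hOmMeas : MeasurableSet (Om Q l) := measurable_Om hmem hconn hdisj hQfin
  set U : ℕ → Set (ℤ → ℝ) := fun b =>
    Om Q l ∩ {x | zeta' Q l j x = b} ∩ {x | t + 1 ≤ eta Q l (j+1) (b : ℤ) x} with hUdef
  set S : ℕ → Set (ℤ → ℝ) := fun b =>
    Om Q l ∩ {x | zeta' Q l j (shiftc (-(b:ℤ)) x) = b} ∩ {x | t + 1 ≤ eta Q l (j+1) 0 x}
    with hSdef
  have hUmeas : ∀ b, MeasurableSet (U b) := by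
    intro b
    exact (hOmMeas.inter ((measurable_zeta' hmem hconn hdisj hQfin j)
        (measurableSet_singleton b))).inter
      (measurable_eta hmem hconn hdisj hQfin (j+1) (b:ℤ) measurableSet_Ici)
  have hSmeas : ∀ b, MeasurableSet (S b) := by
    intro b
    exact (hOmMeas.inter (((measurable_zeta' hmem hconn hdisj hQfin j).comp
        (measurable_shiftc (-(b:ℤ)))) (measurableSet_singleton b))).inter
      (measurable_eta hmem hconn hdisj hQfin (j+1) 0 measurableSet_Ici)
  have hLHS : Om Q l ∩ {x | t + 1 ≤ eta Q l (j+1) (zeta' Q l j x : ℤ) x} = ⋃ b : ℕ, U b := by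
    ext x
    simp only [hUdef, mem_iUnion, mem_inter_iff, mem_setOf_eq]
    constructor
    · intro hx
      exact ⟨zeta' Q l j x, ⟨hx.1, rfl⟩, hx.2⟩
    · rintro ⟨b, ⟨hOm, hb⟩, hx⟩
      exact ⟨hOm, by rwa [hb]⟩
  have hUdisj : Pairwise (Function.onFun Disjoint U) := by
    intro b b' hbb
    refine Set.disjoint_left.mpr ?_
    rintro x ⟨⟨-, h1⟩, -⟩ ⟨⟨-, h2⟩, -⟩
    exact hbb (h1.symm.trans h2)
  have hUS : ∀ b, U b = (shiftc (b:ℤ)) ⁻¹' (S b) := by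
    intro b
    ext x
    simp only [hUdef, hSdef, mem_preimage, mem_inter_iff, mem_setOf_eq]
    rw [Om_shiftc, shiftc_shiftc, show (-(b:ℤ) + b) = 0 by ring, shiftc_zero,
      eta_shiftc, zero_add]
  have hSdisj : Pairwise (Function.onFun Disjoint S) := by
    intro b b' hbb
    refine Set.disjoint_left.mpr ?_
    rintro x ⟨⟨hOm, h1⟩, -⟩ ⟨⟨-, h2⟩, -⟩
    apply hbb
    have e1 : achain Q l j (-(b:ℤ)) x = 0 := by
      rw [achain]; rw [h1]; ring
    have e2 : achain Q l j (-(b':ℤ)) x = 0 := by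
      rw [achain]; rw [h2]; ring
    have := achain_inj hOm j (e1.trans e2.symm)
    omega
  calc ν (Om Q l ∩ {x | t + 1 ≤ eta Q l (j+1) (zeta' Q l j x : ℤ) x})
      = ν (⋃ b : ℕ, U b) := by rw [hLHS]
    _ = ∑' b : ℕ, ν (U b) := measure_iUnion hUdisj hUmeas
    _ = ∑' b : ℕ, ν (S b) := by
        refine tsum_congr (fun b => ?_)
        rw [hUS b, (mp_shiftc hν (b:ℤ)).measure_preimage (hSmeas b).nullMeasurableSet]
    _ = ν (⋃ b : ℕ, S b) := (measure_iUnion hSdisj hSmeas).symm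
    _ ≤ ν (Om Q l ∩ {x | t + 1 ≤ eta Q l (j+1) 0 x}) := by
        refine measure_mono ?_
        rintro x hx
        obtain ⟨b, ⟨hOm, -⟩, hx2⟩ := mem_iUnion.mp hx
        exact ⟨hOm, hx2⟩

end counting

-- ### layer cake (finite)

lemma sum_ite_min (L n : ℕ) :
    (∑ t ∈ Finset.range L, if t + 1 ≤ n then (1:ℝ≥0∞) else 0) = ((min n L : ℕ) : ℝ≥0∞) := by
  induction L with
  | zero => simp
  | succ L ih =>
    rw [Finset.sum_range_succ, ih]
    by_cases h : L + 1 ≤ n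
    · rw [if_pos h, show min n (L+1) = min n L + 1 by omega]
      push_cast; ring
    · rw [if_neg h, show min n (L+1) = min n L by omega, add_zero]

lemma layer_cake {α : Type*} [MeasurableSpace α] (ρ : Measure α) (g : α → ℕ)
    (hg : Measurable g) (L : ℕ) :
    ∑ t ∈ Finset.range L, ρ {x | t + 1 ≤ g x} = ∫⁻ x, ((min (g x) L : ℕ) : ℝ≥0∞) ∂ρ := by
  have hmeas : ∀ t : ℕ, MeasurableSet {x | t + 1 ≤ g x} := fun t => hg measurableSet_Ici
  calc ∑ t ∈ Finset.range L, ρ {x | t + 1 ≤ g x}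
      = ∑ t ∈ Finset.range L, ∫⁻ x, ({x | t + 1 ≤ g x}).indicator 1 x ∂ρ :=
        Finset.sum_congr rfl (fun t _ => (lintegral_indicator_one (hmeas t)).symm)
    _ = ∫⁻ x, ∑ t ∈ Finset.range L, ({x | t + 1 ≤ g x}).indicator 1 x ∂ρ :=
        (lintegral_finset_sum _ (fun t _ =>
          (measurable_const.indicator (hmeas t)))).symm
    _ = ∫⁻ x, ((min (g x) L : ℕ) : ℝ≥0∞) ∂ρ := by
        refine lintegral_congr (fun x => ?_)
        rw [← sum_ite_min L (g x)]
        refine Finset.sum_congr rfl (fun t _ => ?_)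
        rw [Set.indicator_apply]
        simp only [mem_setOf_eq, Pi.one_apply]

lemma min_sum_le {ι : Type*} (s : Finset ι) (f : ι → ℕ) (L : ℕ) :
    min (∑ i ∈ s, f i) L ≤ ∑ i ∈ s, min (f i) L := by
  classical
  induction s using Finset.induction_on with
  | empty => simp
  | @insert a s h ih =>
    rw [Finset.sum_insert h, Finset.sum_insert h]
    omega

-- ### monotonicity of cell counts

lemma nest_mono (hnest : ∀ k x, Q (k + 1) x ⊆ Q k x) :
    ∀ {a b : ℕ}, a ≤ b → ∀ z, Q b z ⊆ Q a z := by
  intro a b hab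
  induction b, hab using Nat.le_induction with
  | base => exact fun z => subset_rfl
  | succ b hab ih => exact fun z => (hnest b z).trans (ih z)

lemma Npow_mono (hmem : ∀ k x, x ∈ Q k x)
    (hdisj : ∀ k x y, Q k x = Q k y ∨ Disjoint (Q k x) (Q k y))
    (hnest : ∀ k x, Q (k + 1) x ⊆ Q k x)
    (hQfin : ∀ k, (Set.range (Q k)).Finite)
    (hlmono : Monotone l) {a b : ℕ} (hab : a ≤ b) :
    (Set.range (Q a)).ncard ^ (l a) ≤ (Set.range (Q b)).ncard ^ (l b) := by
  classical
  have hcard : (Set.range (Q a)).ncard ≤ (Set.range (Q b)).ncard := by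
    set F : Set ℝ → Set ℝ := fun c => if h : c.Nonempty then Q a h.some else ∅ with hF
    have hsub : Set.range (Q a) ⊆ F '' (Set.range (Q b)) := by
      rintro - ⟨z, rfl⟩
      refine ⟨Q b z, ⟨z, rfl⟩, ?_⟩
      have hne : (Q b z).Nonempty := ⟨z, hmem b z⟩
      rw [hF]
      simp only [hne, dif_pos]
      have hw : hne.some ∈ Q a z := nest_mono hnest hab z hne.some_mem
      exact cell_eq hmem hdisj hw
    calc (Set.range (Q a)).ncard
        ≤ (F '' (Set.range (Q b))).ncard :=
          Set.ncard_le_ncard hsub ((hQfin b).image F)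
      _ ≤ (Set.range (Q b)).ncard := Set.ncard_image_le (hQfin b)
  have hpos : 1 ≤ (Set.range (Q b)).ncard := by
    have : (Set.range (Q b)).Nonempty := ⟨Q b 0, 0, rfl⟩
    have := (Set.ncard_pos (hQfin b)).mpr this
    omega
  calc (Set.range (Q a)).ncard ^ (l a)
      ≤ (Set.range (Q b)).ncard ^ (l a) := Nat.pow_le_pow_left hcard _
    _ ≤ (Set.range (Q b)).ncard ^ (l b) := Nat.pow_le_pow_right hpos (hlmono hab)

lemma zeta'_eq_sum (k : ℕ) (x : ℤ → ℝ) :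
    zeta' Q l k x = ∑ j ∈ Finset.range k, eta Q l (j+1) ((zeta' Q l j x : ℕ) : ℤ) x := by
  induction k with
  | zero => rfl
  | succ k ih => rw [Finset.sum_range_succ, ← ih]; rfl

lemma recZeta_X_eq {Ω : Type*} (X : ℤ → Ω → ℝ) (ω : Ω) (k : ℕ) :
    recZeta Q l X k ω = recZeta Q l Yc k (fun n => X n ω) := by
  induction k with
  | zero => rfl
  | succ k ih =>
    show recZeta Q l X k ω + (recEta Q l X (k+1) (recZeta Q l X k ω) ω : ℤ) = _
    rw [ih]
    rfl

-- ### core bound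

section core
variable {ν : Measure (ℤ → ℝ)} [IsProbabilityMeasure ν]

lemma core_bound (hν : Measure.map (shiftc 1) ν = ν)
    (hmem : ∀ k x, x ∈ Q k x)
    (hconn : ∀ k x, (Q k x).OrdConnected)
    (hdisj : ∀ k x y, Q k x = Q k y ∨ Disjoint (Q k x) (Q k y))
    (hnest : ∀ k x, Q (k + 1) x ⊆ Q k x)
    (hQfin : ∀ k, (Set.range (Q k)).Finite)
    (hlmono : Monotone l)
    (k L : ℕ) :
    (L : ℝ≥0∞) * ν {x | L ≤ zeta' Q l k x} ≤
      (k : ℝ≥0∞) * (((Set.range (Q k)).ncard ^ (l k) : ℕ) : ℝ≥0∞) := by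
  have hOm : ν (Om Q l)ᶜ = 0 := om_compl_null hν hmem hconn hdisj hQfin
  have hOmM : MeasurableSet (Om Q l) := measurable_Om hmem hconn hdisj hQfin
  have hζmeas : ∀ j, Measurable (zeta' Q l j) := measurable_zeta' hmem hconn hdisj hQfin
  have hηmeas : ∀ j, Measurable (fun x => eta Q l (j+1) ((zeta' Q l j x : ℕ) : ℤ) x) :=
    fun j => measurable_comp_nat (hζmeas j)
      (fun b => measurable_eta hmem hconn hdisj hQfin (j+1) ((b : ℕ) : ℤ))
  set S : Set (ℤ → ℝ) := {x | L ≤ zeta' Q l k x} with hSdef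
  have hEq : ν S = ν (Om Q l ∩ S) := by
    refine le_antisymm ?_ (measure_mono inter_subset_right)
    calc ν S ≤ ν ((Om Q l ∩ S) ∪ (Om Q l)ᶜ) := by
          refine measure_mono (fun x hx => ?_)
          by_cases h : x ∈ Om Q l
          · exact Or.inl ⟨h, hx⟩
          · exact Or.inr h
      _ ≤ ν (Om Q l ∩ S) + ν (Om Q l)ᶜ := measure_union_le _ _
      _ = ν (Om Q l ∩ S) := by rw [hOm, add_zero]
  set ρ : Measure (ℤ → ℝ) := ν.restrict (Om Q l) with hρdef
  have hρ : ∀ (T : Set (ℤ → ℝ)), MeasurableSet T → ρ T = ν (Om Q l ∩ T) := by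
    intro T hT; rw [hρdef, Measure.restrict_apply hT, inter_comm]
  calc (L : ℝ≥0∞) * ν S
      = ∑ t ∈ Finset.range L, ν (Om Q l ∩ S) := by
        rw [← hEq, Finset.sum_const, Finset.card_range, nsmul_eq_mul]
    _ ≤ ∑ t ∈ Finset.range L, ρ {x | t + 1 ≤ zeta' Q l k x} := by
        refine Finset.sum_le_sum (fun t ht => ?_)
        rw [hρ {x | t + 1 ≤ zeta' Q l k x}
          (show MeasurableSet {x | t + 1 ≤ zeta' Q l k x} from (hζmeas k) measurableSet_Ici)]
        refine measure_mono (fun x hx => ⟨hx.1, ?_⟩)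
        have := hx.2
        simp only [hSdef, mem_setOf_eq] at this ⊢
        have := Finset.mem_range.mp ht
        omega
    _ = ∫⁻ x, ((min (zeta' Q l k x) L : ℕ) : ℝ≥0∞) ∂ρ := layer_cake ρ _ (hζmeas k) L
    _ ≤ ∫⁻ x, ∑ j ∈ Finset.range k,
          ((min (eta Q l (j+1) ((zeta' Q l j x : ℕ) : ℤ) x) L : ℕ) : ℝ≥0∞) ∂ρ := by
        refine lintegral_mono (fun x => ?_)
        have h1 := min_sum_le (Finset.range k)
          (fun j => eta Q l (j+1) ((zeta' Q l j x : ℕ) : ℤ) x) L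
        rw [← zeta'_eq_sum] at h1
        calc ((min (zeta' Q l k x) L : ℕ) : ℝ≥0∞)
            ≤ ((∑ j ∈ Finset.range k,
                min (eta Q l (j+1) ((zeta' Q l j x : ℕ) : ℤ) x) L : ℕ) : ℝ≥0∞) := by
              exact_mod_cast h1
          _ = _ := by push_cast; rfl
    _ = ∑ j ∈ Finset.range k, ∫⁻ x,
          ((min (eta Q l (j+1) ((zeta' Q l j x : ℕ) : ℤ) x) L : ℕ) : ℝ≥0∞) ∂ρ :=
        lintegral_finset_sum _ (fun j _ =>
          (measurable_from_top (f := fun n : ℕ => ((min n L : ℕ) : ℝ≥0∞))).comp (hηmeas j))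
    _ = ∑ j ∈ Finset.range k, ∑ t ∈ Finset.range L,
          ρ {x | t + 1 ≤ eta Q l (j+1) ((zeta' Q l j x : ℕ) : ℤ) x} :=
        Finset.sum_congr rfl (fun j _ => (layer_cake ρ _ (hηmeas j) L).symm)
    _ ≤ ∑ j ∈ Finset.range k, ∑ t ∈ Finset.range L,
          ν (Om Q l ∩ {x | t + 1 ≤ eta Q l (j+1) 0 x}) := by
        refine Finset.sum_le_sum (fun j _ => Finset.sum_le_sum (fun t _ => ?_))
        rw [hρ {x | t + 1 ≤ eta Q l (j+1) ((zeta' Q l j x : ℕ) : ℤ) x}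
          (show MeasurableSet {x | t + 1 ≤ eta Q l (j+1) ((zeta' Q l j x : ℕ) : ℤ) x} from
            (hηmeas j) measurableSet_Ici)]
        exact eta_at_zeta_bound hν hmem hconn hdisj hQfin j t
    _ ≤ ∑ j ∈ Finset.range k,
          (((Set.range (Q (j+1))).ncard ^ (l (j+1)) : ℕ) : ℝ≥0∞) :=
        Finset.sum_le_sum (fun j _ => kac_bound hν hmem hconn hdisj hQfin (j+1) L)
    _ ≤ ∑ j ∈ Finset.range k,
          (((Set.range (Q k)).ncard ^ (l k) : ℕ) : ℝ≥0∞) := by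
        refine Finset.sum_le_sum (fun j hj => ?_)
        have hjk : j + 1 ≤ k := Finset.mem_range.mp hj
        exact_mod_cast Npow_mono hmem hdisj hnest hQfin hlmono hjk
    _ = (k : ℝ≥0∞) * (((Set.range (Q k)).ncard ^ (l k) : ℕ) : ℝ≥0∞) := by
        rw [Finset.sum_const, Finset.card_range, nsmul_eq_mul]

end core

-- ### main theorem, proved on sequence space and transferred

theorem main {Ω : Type*} [MeasurableSpace Ω] (μ : Measure Ω) [IsProbabilityMeasure μ]
    (X : ℤ → Ω → ℝ) (hXmeas : ∀ n, Measurable (X n)) (hstat : IsStationaryRealProcess μ X)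
    (Q : ℕ → ℝ → Set ℝ) (hQ : IsNestedIntervalQuantizer Q)
    (hQfin : ∀ k, (Set.range (Q k)).Finite)
    (l : ℕ → ℕ) (hl : GoodLengths l)
    (ε : ℝ) (hε : 0 < ε)
    (hsum : Summable (fun k : ℕ => ((k : ℝ) + 1) * (2 : ℝ) ^ (-((l k : ℝ) * ε)))) :
    ∀ᵐ ω ∂μ, ∀ᶠ k in Filter.atTop,
      ((recZeta Q l X k ω : ℝ)) <
        ((Set.range (Q k)).ncard : ℝ) ^ (l k) * (2 : ℝ) ^ ((l k : ℝ) * ε) := by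
  obtain ⟨hmem, hconn, hdisj, -, hnest, -⟩ := hQ
  obtain ⟨hlmono, -, -, -⟩ := hl
  have hstat' : Measure.map (fun ω (n : ℤ) => X (n + 1) ω) μ
      = Measure.map (fun ω (n : ℤ) => X n ω) μ := hstat
  set traj : Ω → (ℤ → ℝ) := fun ω n => X n ω with htrajdef
  have htraj : Measurable traj := measurable_pi_lambda _ (fun n => hXmeas n)
  set ν : Measure (ℤ → ℝ) := Measure.map traj μ with hνdef
  haveI : IsProbabilityMeasure ν := Measure.isProbabilityMeasure_map htraj.aemeasurable
  have hν : Measure.map (shiftc 1) ν = ν := by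
    rw [hνdef, Measure.map_map (measurable_shiftc 1) htraj]
    have hcomp : shiftc 1 ∘ traj = fun ω (n : ℤ) => X (n + 1) ω := rfl
    rw [hcomp]
    exact hstat'
  set R : ℕ → ℝ := fun k => ((Set.range (Q k)).ncard : ℝ) ^ (l k) * (2:ℝ) ^ ((l k:ℝ) * ε)
    with hRdef
  have hNcard : ∀ k, 1 ≤ (Set.range (Q k)).ncard := by
    intro k
    have h1 : (Set.range (Q k)).Nonempty := ⟨Q k 0, 0, rfl⟩
    have := (Set.ncard_pos (hQfin k)).mpr h1
    omega
  have hR1 : ∀ k, 1 ≤ R k := by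
    intro k
    have ha : (1:ℝ) ≤ ((Set.range (Q k)).ncard : ℝ) ^ (l k) := by
      apply one_le_pow₀
      exact_mod_cast hNcard k
    have hb : (1:ℝ) ≤ (2:ℝ) ^ ((l k:ℝ) * ε) :=
      Real.one_le_rpow one_le_two (mul_nonneg (Nat.cast_nonneg _) hε.le)
    calc (1:ℝ) = 1 * 1 := by ring
      _ ≤ ((Set.range (Q k)).ncard : ℝ) ^ (l k) * (2:ℝ) ^ ((l k:ℝ) * ε) := by
          exact mul_le_mul ha hb one_pos.le (le_trans zero_le_one ha)
  set s : ℕ → Set (ℤ → ℝ) := fun k => {x | R k ≤ ((zeta' Q l k x : ℕ) : ℝ)} with hsdef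
  have hbound : ∀ k, ν (s k) ≤ ENNReal.ofReal (((k:ℝ)+1) * (2:ℝ) ^ (-((l k:ℝ)*ε))) := by
    intro k
    set N : ℕ := (Set.range (Q k)).ncard ^ (l k) with hNdef
    set L : ℕ := ⌈R k⌉₊ with hLdef
    have hL1 : 1 ≤ L := Nat.one_le_ceil_iff.mpr (lt_of_lt_of_le one_pos (hR1 k))
    have hsk : s k = {x | L ≤ zeta' Q l k x} := by
      ext x
      simp only [hsdef, mem_setOf_eq, hLdef]
      exact (Nat.ceil_le).symm
    have hcore := core_bound hν hmem hconn hdisj hnest hQfin hlmono k L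
    rw [← hNdef, ← hsk] at hcore
    have hLne0 : (L:ℝ≥0∞) ≠ 0 := by
      simp only [ne_eq, Nat.cast_eq_zero]
      omega
    have hLnetop : (L:ℝ≥0∞) ≠ ⊤ := ENNReal.natCast_ne_top L
    have hdiv : ν (s k) ≤ (k : ℝ≥0∞) * (N:ℝ≥0∞) / (L:ℝ≥0∞) := by
      rw [ENNReal.le_div_iff_mul_le (Or.inl hLne0) (Or.inl hLnetop), mul_comm]
      exact hcore
    refine le_trans hdiv ?_
    have hLpos : (0:ℝ) < (L:ℝ) := by exact_mod_cast hL1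
    have e1 : (k : ℝ≥0∞) * (N:ℝ≥0∞) / (L:ℝ≥0∞)
        = ENNReal.ofReal ((k:ℝ) * (N:ℝ) / (L:ℝ)) := by
      rw [ENNReal.ofReal_div_of_pos hLpos, ENNReal.ofReal_mul (Nat.cast_nonneg k),
        ENNReal.ofReal_natCast, ENNReal.ofReal_natCast, ENNReal.ofReal_natCast]
    rw [e1]
    apply ENNReal.ofReal_le_ofReal
    have hRle : R k ≤ (L:ℝ) := Nat.le_ceil _
    have hRpos : (0:ℝ) < R k := lt_of_lt_of_le one_pos (hR1 k)
    have h2 : (k:ℝ) * N / (L:ℝ) ≤ (k:ℝ) * N / R k := by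
      gcongr
    refine le_trans h2 ?_
    have hNR : (N:ℝ) = ((Set.range (Q k)).ncard : ℝ) ^ (l k) := by
      rw [hNdef]; push_cast; ring
    have hNpos : (0:ℝ) < ((Set.range (Q k)).ncard : ℝ) ^ (l k) := by
      have : (0:ℝ) < ((Set.range (Q k)).ncard : ℝ) := by exact_mod_cast hNcard k
      positivity
    have hrpos : (0:ℝ) < (2:ℝ) ^ ((l k:ℝ)*ε) := Real.rpow_pos_of_pos two_pos _
    have h3 : (k:ℝ) * N / R k = (k:ℝ) * (2:ℝ) ^ (-((l k:ℝ)*ε)) := by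
      rw [hRdef, hNR, Real.rpow_neg (by norm_num : (0:ℝ) ≤ 2)]
      field_simp
    rw [h3]
    have hrpos' : (0:ℝ) ≤ (2:ℝ) ^ (-((l k:ℝ)*ε)) := (Real.rpow_pos_of_pos two_pos _).le
    have hk1 : (k:ℝ) ≤ (k:ℝ) + 1 := by linarith
    exact mul_le_mul_of_nonneg_right hk1 hrpos'
  have htsum : (∑' k, ν (s k)) ≠ ⊤ := by
    have hle := ENNReal.tsum_le_tsum hbound
    have heq : (∑' k : ℕ, ENNReal.ofReal (((k:ℝ)+1) * (2:ℝ) ^ (-((l k:ℝ)*ε))))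
        = ENNReal.ofReal (∑' k : ℕ, ((k:ℝ)+1) * (2:ℝ) ^ (-((l k:ℝ)*ε))) := by
      refine (ENNReal.ofReal_tsum_of_nonneg (fun k => ?_) hsum).symm
      have : (0:ℝ) ≤ (2:ℝ) ^ (-((l k:ℝ)*ε)) := (Real.rpow_pos_of_pos two_pos _).le
      positivity
    rw [heq] at hle
    exact ne_top_of_le_ne_top ENNReal.ofReal_ne_top hle
  have hae : ∀ᵐ x ∂ν, ∀ᶠ k in Filter.atTop, x ∉ s k :=
    MeasureTheory.ae_eventually_notMem htsum
  rw [hνdef] at hae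
  have hμae : ∀ᵐ ω ∂μ, ∀ᶠ k in Filter.atTop, traj ω ∉ s k :=
    ae_of_ae_map htraj.aemeasurable hae
  filter_upwards [hμae] with ω hω
  refine hω.mono (fun k hk => ?_)
  simp only [hsdef, mem_setOf_eq] at hk
  push_neg at hk
  have hzz : recZeta Q l X k ω = (zeta' Q l k (traj ω) : ℤ) := by
    rw [recZeta_X_eq (Q := Q) (l := l) X ω k, recZeta_eq]
  calc ((recZeta Q l X k ω : ℤ) : ℝ)
      = ((zeta' Q l k (traj ω) : ℕ) : ℝ) := by rw [hzz]; push_cast; ring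
    _ < R k := hk

end
end IntermittentAux


/-- Growth bound for the stopping times with finite partitions: if
`∑ (k+1) 2^{-l_k ε} < ∞` then `ζ_k < |P_k|^{l_k} · 2^{l_k ε}` eventually a.s.,
where `|P_k|` is the number of cells of the `k`-th partition. -/
theorem intermittent_stopping_time_growth
    {Ω : Type*} [MeasurableSpace Ω] (μ : Measure Ω) [IsProbabilityMeasure μ]
    (X : ℤ → Ω → ℝ) (hXmeas : ∀ n, Measurable (X n)) (hstat : IsStationaryRealProcess μ X)
    (Q : ℕ → ℝ → Set ℝ) (hQ : IsNestedIntervalQuantizer Q)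
    (hQfin : ∀ k, (Set.range (Q k)).Finite)
    (l : ℕ → ℕ) (hl : GoodLengths l)
    (ε : ℝ) (hε : 0 < ε)
    (hsum : Summable (fun k : ℕ => ((k : ℝ) + 1) * (2 : ℝ) ^ (-((l k : ℝ) * ε)))) :
    ∀ᵐ ω ∂μ, ∀ᶠ k in Filter.atTop,
      ((recZeta Q l X k ω : ℝ)) <
        ((Set.range (Q k)).ncard : ℝ) ^ (l k) * (2 : ℝ) ^ ((l k : ℝ) * ε) :=
  IntermittentAux.main μ X hXmeas hstat Q hQ hQfin l hl ε hε hsum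
end
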